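/- arXiv:2212.06819 — 4 statements merged into one kernel-verified Lean document; each statement's English description precedes it below -/
import Mathlib

section
/- Let G be a finite connected graph with positive edge weights x. Then (J_x γ_1 ∧ … ∧ J_x γ_{b1}) ∧ (κ_1 ∧ … ∧ κ_{|V|−1}) = ± (Π_{e∈E⁺} x_e)^{−1} · (Σ_{T spanning tree} Π_{e∈T} x_e) · e*_{E⁺}, where (γ_i) is any integral basis of the cycle group, (κ_j) any integral basis of the cut group, J_x sends edge e to x_e^{−1} e*, and e*_{E⁺} is the wedge of all dual edge vectors. In particular the norm of the left-hand side equals (Π_e x_e)^{−1/2} · Σ_T Π_{e∈T} x_e. -/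
/-! Framework: finite graph `(V, E, head, tail)`; `C₁(G,ℤ)` and `C¹(G,ℤ)` are both
modeled as `E → ℤ` (edge and dual-edge coordinates). -/

section Graph

variable {V E : Type*} [Fintype V] [Fintype E] [DecidableEq V] [DecidableEq E]

/-- The boundary operator `∂`; its kernel is the cycle group `Z₁(G,ℤ)`. -/
def bd (head tail : E → V) : (E → ℤ) →ₗ[ℤ] (V → ℤ) where
  toFun c := fun v => ∑ e, c e *
    ((if head e = v then 1 else 0) - (if tail e = v then 1 else 0))
  map_add' c d := by
    funext v
    simp [add_mul, Finset.sum_add_distrib]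
  map_smul' r c := by
    funext v
    simp [Finset.mul_sum, mul_assoc]

/-- The coboundary operator `δ`; its image is the cut group `B¹(G,ℤ)`. -/
def cobd (head tail : E → V) : (V → ℤ) →ₗ[ℤ] (E → ℤ) where
  toFun f := fun e => f (head e) - f (tail e)
  map_add' f g := by funext e; simp; ring
  map_smul' r f := by funext e; simp [mul_sub]

/-- Two vertices are connected through the edges of `T`. -/
def Conn (head tail : E → V) (T : Finset E) (v w : V) : Prop :=
  Relation.ReflTransGen
    (fun a b => ∃ e ∈ T, (head e = a ∧ tail e = b) ∨ (head e = b ∧ tail e = a)) v w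

/-- `T` is a spanning tree. -/
def IsSpanningTree (head tail : E → V) (T : Finset E) : Prop :=
  T.card + 1 = Fintype.card V ∧ ∀ v w : V, Conn head tail T v w

end Graph

open Classical

section Aux

variable {V E : Type*} [Fintype V] [Fintype E] [DecidableEq V] [DecidableEq E]
variable {head tail : E → V}

theorem conn_symm {S : Finset E} {v w : V} (h : Conn head tail S v w) :
    Conn head tail S w v := by
  induction h with
  | refl => exact .refl
  | tail _ h2 ih =>
    refine Relation.ReflTransGen.trans (Relation.ReflTransGen.single ?_) ih
    obtain ⟨e, he, h3⟩ := h2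
    exact ⟨e, he, h3.symm⟩

theorem conn_constOn {R : Type*} [CommRing R] {S : Finset E} {f : V → R}
    (hf : ∀ e ∈ S, f (head e) = f (tail e)) {v w : V}
    (h : Conn head tail S v w) : f v = f w := by
  induction h with
  | refl => rfl
  | tail _ h2 ih =>
    obtain ⟨e, he, h3⟩ := h2
    rcases h3 with ⟨h4, h5⟩ | ⟨h4, h5⟩
    · rw [ih, ← h4, ← h5, hf e he]
    · rw [ih, ← h4, ← h5, (hf e he).symm]

theorem conn_card {S : Finset E} (h : ∀ v w : V, Conn head tail S v w) :
    Fintype.card V ≤ S.card + 1 := by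
  by_cases hV : Nonempty V
  · obtain ⟨v₀⟩ := hV
    let L : (V → ℝ) →ₗ[ℝ] ({e // e ∈ S} → ℝ) :=
      { toFun := fun f => fun e => f (head e.1) - f (tail e.1)
        map_add' := by intro f g; funext e; simp; ring
        map_smul' := by intro r f; funext e; simp [mul_sub] }
    have hker : LinearMap.ker L ≤ Submodule.span ℝ {(fun _ => (1:ℝ) : V → ℝ)} := by
      intro f hf
      have hf' : ∀ e ∈ S, f (head e) = f (tail e) := by
        intro e he
        have := congrFun (LinearMap.mem_ker.mp hf) ⟨e, he⟩
        simpa [L, sub_eq_zero] using this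
      have hconst : ∀ v, f v = f v₀ := fun v => conn_constOn hf' (h v v₀)
      have : f = f v₀ • (fun _ => (1:ℝ)) := by
        funext v; simp [hconst v]
      rw [this]
      exact Submodule.smul_mem _ _ (Submodule.mem_span_singleton_self _)
    have h1 : Fintype.card V = Module.finrank ℝ (V → ℝ) := by
      rw [Module.finrank_fintype_fun_eq_card]
    have h2 := LinearMap.finrank_range_add_finrank_ker L
    have h3 : Module.finrank ℝ (LinearMap.range L) ≤ S.card := by
      have := Submodule.finrank_le (LinearMap.range L)
      rw [Module.finrank_fintype_fun_eq_card, Fintype.card_coe] at this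
      exact this
    have h4 : Module.finrank ℝ (LinearMap.ker L) ≤ 1 := by
      have h6 := Submodule.finrank_mono hker
      have h5 : Module.finrank ℝ
          (Submodule.span ℝ {(fun _ => (1:ℝ) : V → ℝ)}) ≤ 1 := by
        have hz : (fun _ => (1:ℝ) : V → ℝ) ≠ 0 := by
          intro h; have := congrFun h v₀; norm_num at this
        rw [finrank_span_singleton hz]
      omega
    omega
  · simp [not_nonempty_iff.mp hV, Fintype.card_eq_zero]

end Aux

section Aux2
set_option linter.unusedSectionVars false

variable {V E : Type*} [Fintype V] [Fintype E] [DecidableEq V] [DecidableEq E]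
variable {head tail : E → V}

open Classical

theorem conn_erase_all {S : Finset E} {e₀ : E}
    (h1 : Conn head tail (S.erase e₀) (head e₀) (tail e₀)) {v w : V}
    (h : Conn head tail S v w) : Conn head tail (S.erase e₀) v w := by
  induction h with
  | refl => exact .refl
  | tail _ h2 ih =>
    obtain ⟨e, he, h3⟩ := h2
    by_cases he' : e = e₀
    · subst he'
      rcases h3 with ⟨h4, h5⟩ | ⟨h4, h5⟩
      · exact ih.trans (h4 ▸ h5 ▸ h1)
      · exact ih.trans (h4 ▸ h5 ▸ conn_symm h1)
    · exact ih.tail ⟨e, Finset.mem_erase.mpr ⟨he', he⟩, h3⟩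

theorem tree_bridge {S : Finset E} (hS : IsSpanningTree head tail S) {e₀ : E}
    (he₀ : e₀ ∈ S) : ¬ Conn head tail (S.erase e₀) (head e₀) (tail e₀) := by
  intro h1
  have hall : ∀ v w : V, Conn head tail (S.erase e₀) v w :=
    fun v w => conn_erase_all h1 (hS.2 v w)
  have hcard := conn_card hall
  rw [Finset.card_erase_of_mem he₀] at hcard
  have hpos : 0 < S.card := Finset.card_pos.mpr ⟨e₀, he₀⟩
  have := hS.1
  omega

theorem fund_cut {S : Finset E} (hS : IsSpanningTree head tail S) {e₀ : E}
    (he₀ : e₀ ∈ S) :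
    ∃ f : V → ℤ, ∀ e ∈ S, cobd head tail f e = (if e = e₀ then 1 else 0) := by
  refine ⟨fun v => if Conn head tail (S.erase e₀) (head e₀) v then 1 else 0, ?_⟩
  intro e he
  show (if Conn head tail (S.erase e₀) (head e₀) (head e) then (1:ℤ) else 0) -
      (if Conn head tail (S.erase e₀) (head e₀) (tail e) then (1:ℤ) else 0) = _
  by_cases h : e = e₀
  · subst h
    have h1 : Conn head tail (S.erase e) (head e) (head e) := Relation.ReflTransGen.refl
    rw [if_pos h1, if_neg (tree_bridge hS he₀), if_pos rfl]; ring
  · have hstep : Conn head tail (S.erase e₀) (head e) (tail e) :=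
      Relation.ReflTransGen.single ⟨e, Finset.mem_erase.mpr ⟨h, he⟩, Or.inl ⟨rfl, rfl⟩⟩
    have hiff : Conn head tail (S.erase e₀) (head e₀) (head e) ↔
        Conn head tail (S.erase e₀) (head e₀) (tail e) :=
      ⟨fun hc => hc.trans hstep, fun hc => hc.trans (conn_symm hstep)⟩
    rw [if_neg h]
    by_cases hc : Conn head tail (S.erase e₀) (head e₀) (head e)
    · rw [if_pos hc, if_pos (hiff.mp hc), sub_self]
    · rw [if_neg hc, if_neg (fun hc' => hc (hiff.mpr hc')), sub_self]

theorem adjoint_sum (z : E → ℤ) (f : V → ℤ) :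
    ∑ e, z e * (f (head e) - f (tail e)) = ∑ v, bd head tail z v * f v := by
  have h : ∀ v, bd head tail z v * f v =
      ∑ e, z e * ((if head e = v then 1 else 0) - (if tail e = v then 1 else 0)) * f v := by
    intro v
    show (∑ e, z e * _) * f v = _
    rw [Finset.sum_mul]
  rw [Finset.sum_congr rfl (fun v _ => h v), Finset.sum_comm]
  refine Finset.sum_congr rfl (fun e _ => ?_)
  simp only [sub_mul, mul_sub, mul_assoc, ite_mul, one_mul, zero_mul, mul_ite, mul_zero,
    Finset.sum_sub_distrib, Finset.sum_ite_eq, Finset.mem_univ, if_true, mul_one]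

theorem bd_single (e : E) :
    bd head tail (fun e' => if e' = e then 1 else 0) =
      fun v => (if head e = v then 1 else 0) - (if tail e = v then 1 else 0) := by
  funext v
  show (∑ e', (if e' = e then (1:ℤ) else 0) * _) = _
  simp [ite_mul]

theorem conn_chain {S : Finset E} {a b : V} (h : Conn head tail S a b) :
    ∃ z : E → ℤ, (∀ e, e ∉ S → z e = 0) ∧
      bd head tail z = fun v => (if b = v then 1 else 0) - (if a = v then 1 else 0) := by
  induction h with
  | refl => exact ⟨0, fun e _ => rfl, by funext v; simp⟩
  | @tail b c _ h2 ih =>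
    obtain ⟨z, hz, hbd⟩ := ih
    obtain ⟨e, he, h3⟩ := h2
    rcases h3 with ⟨h4, h5⟩ | ⟨h4, h5⟩
    · refine ⟨z - fun e' => if e' = e then 1 else 0, ?_, ?_⟩
      · intro e' he'
        have : e' ≠ e := fun h => he' (h ▸ he)
        simp [hz e' he', this]
      · rw [map_sub, hbd, bd_single, h4, h5]
        funext v
        simp only [Pi.sub_apply]
        ring
    · refine ⟨z + fun e' => if e' = e then 1 else 0, ?_, ?_⟩
      · intro e' he'
        have : e' ≠ e := fun h => he' (h ▸ he)
        simp [hz e' he', this]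
      · rw [map_add, hbd, bd_single, h4, h5]
        funext v
        simp only [Pi.add_apply]
        ring

end Aux2

section CB
open Classical

variable {E : Type*} [Fintype E] [DecidableEq E]

/-- A chosen equivalence between `Fin m` and a finset of card `m`. -/
noncomputable def fsEquiv (S : Finset E) {m : ℕ} (h : S.card = m) : Fin m ≃ {x // x ∈ S} :=
  (Fintype.equivFinOfCardEq (by rw [Fintype.card_coe, h])).symm

theorem cauchy_binet (m : ℕ) (A : Matrix E (Fin m) ℝ) (d : E → ℝ) :
    (A.transpose * Matrix.diagonal d * A).det =
      ∑ S : {S : Finset E // S.card = m},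
        (∏ e ∈ S.1, d e) *
          (Matrix.det (Matrix.of fun i j => A (fsEquiv S.1 S.2 i) j)) ^ 2 := by
  classical
  have hrow : (A.transpose * Matrix.diagonal d * A) =
      fun i => ∑ e : E, (A e i * d e) • (fun j => A e j) := by
    funext i j
    simp only [Matrix.mul_apply, Matrix.diagonal_apply, Matrix.transpose_apply,
      Finset.sum_apply, smul_eq_mul, mul_ite, mul_zero, ite_mul, zero_mul,
      Finset.sum_ite_eq, Finset.sum_ite_eq', Finset.mem_univ, if_true, Pi.smul_apply]
  have step1 : (A.transpose * Matrix.diagonal d * A).det =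
      ∑ r : Fin m → E, (∏ i, A (r i) i * d (r i)) *
        (Matrix.of fun i j => A (r i) j).det := by
    show Matrix.detRowAlternating (A.transpose * Matrix.diagonal d * A) = _
    rw [hrow]
    rw [show (Matrix.detRowAlternating (fun i => ∑ e : E, (A e i * d e) • (fun j => A e j))
          : ℝ) = Matrix.detRowAlternating.toMultilinearMap
            (fun i => ∑ e : E, (A e i * d e) • (fun j => A e j)) from rfl]
    rw [MultilinearMap.map_sum]
    refine Finset.sum_congr rfl fun r _ => ?_
    rw [MultilinearMap.map_smul_univ]
    simp only [smul_eq_mul]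
    rfl
  rw [step1]
  set t : (Fin m → E) → ℝ := fun r => (∏ i, A (r i) i * d (r i)) *
    (Matrix.of fun i j => A (r i) j).det with ht
  have hzero : ∀ r : Fin m → E, ¬ Function.Injective r → t r = 0 := by
    intro r hr
    obtain ⟨a, b, hab, hne⟩ := Function.not_injective_iff.mp hr
    have : (Matrix.of fun i j => A (r i) j).det = 0 :=
      Matrix.det_zero_of_row_eq hne (by funext j; simp [hab])
    simp [ht, this]
  have step2 : ∑ r : Fin m → E, t r =
      ∑ r ∈ Finset.univ.filter (fun r => Function.Injective r), t r :=
    (Finset.sum_filter_of_ne (fun r _ hr => by_contra fun h => hr (hzero r h))).symm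
  have step3 :
      ∑ r ∈ Finset.univ.filter (fun r : Fin m → E => Function.Injective r), t r =
      ∑ p : (Σ _S : {S : Finset E // S.card = m}, Equiv.Perm (Fin m)),
        t (fun i => (fsEquiv p.1.1 p.1.2 (p.2 i) : E)) := by
    refine (Finset.sum_bij
      (i := fun (p : (Σ _S : {S : Finset E // S.card = m}, Equiv.Perm (Fin m))) _ =>
        fun i => (fsEquiv p.1.1 p.1.2 (p.2 i) : E)) ?_ ?_ ?_ ?_).symm
    · intro p _
      refine Finset.mem_filter.mpr ⟨Finset.mem_univ _, ?_⟩
      intro i j hij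
      exact p.2.injective ((fsEquiv p.1.1 p.1.2).injective (Subtype.ext hij))
    · intro p hp q hq hfun
      obtain ⟨⟨S, hS⟩, π⟩ := p
      obtain ⟨⟨S', hS'⟩, π'⟩ := q
      replace hfun : (fun i => ((fsEquiv S hS) (π i) : E)) =
          (fun i => ((fsEquiv S' hS') (π' i) : E)) := hfun
      have hmem : ∀ (T : Finset E) (hT : T.card = m) (ρ : Equiv.Perm (Fin m)) (e : E),
          e ∈ T ↔ ∃ i, (fsEquiv T hT (ρ i) : E) = e := by
        intro T hT ρ e
        constructor
        · intro he
          exact ⟨ρ.symm ((fsEquiv T hT).symm ⟨e, he⟩), by simp⟩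
        · rintro ⟨i, rfl⟩
          exact (fsEquiv T hT (ρ i)).2
      have hSS : S = S' := by
        ext e
        rw [hmem S hS π e, hmem S' hS' π' e]
        constructor
        · rintro ⟨i, hi⟩; exact ⟨i, by rw [← congrFun hfun i]; exact hi⟩
        · rintro ⟨i, hi⟩; exact ⟨i, by rw [congrFun hfun i]; exact hi⟩
      subst hSS
      have hππ : π = π' :=
        Equiv.ext fun i => (fsEquiv S hS).injective (Subtype.ext (congrFun hfun i))
      subst hππ
      rfl
    · intro r hr
      have hrinj : Function.Injective r := (Finset.mem_filter.mp hr).2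
      set S : Finset E := Finset.image r Finset.univ with hSdef
      have hcard : S.card = m := by
        rw [hSdef, Finset.card_image_of_injective _ hrinj, Finset.card_univ, Fintype.card_fin]
      have hmem : ∀ i, r i ∈ S := fun i => Finset.mem_image_of_mem r (Finset.mem_univ i)
      set π₀ : Fin m → Fin m := fun i => (fsEquiv S hcard).symm ⟨r i, hmem i⟩ with hπ₀
      have hπ₀inj : Function.Injective π₀ := by
        intro i j hij
        apply hrinj
        have h2 := congrArg (fun k => ((fsEquiv S hcard) k : E)) hij
        simpa only [hπ₀, Equiv.apply_symm_apply] using h2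
      have hπ₀bij : Function.Bijective π₀ := Finite.injective_iff_bijective.mp hπ₀inj
      refine ⟨⟨⟨S, hcard⟩, Equiv.ofBijective π₀ hπ₀bij⟩, Finset.mem_univ _, ?_⟩
      funext i
      show ((fsEquiv S hcard) (π₀ i) : E) = r i
      simp only [hπ₀, Equiv.apply_symm_apply]
    · intro p _
      rfl
  rw [step2, step3, ← Finset.univ_sigma_univ, Finset.sum_sigma]
  refine Finset.sum_congr rfl fun S _ => ?_
  set eS := fsEquiv S.1 S.2 with heS
  set B : Matrix (Fin m) (Fin m) ℝ := Matrix.of fun i j => A (eS i) j with hB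
  have hterm : ∀ π : Equiv.Perm (Fin m),
      t (fun i => (eS (π i) : E)) =
        (∏ e ∈ S.1, d e) * B.det * (((Equiv.Perm.sign π : ℤ) : ℝ) * ∏ i, B (π i) i) := by
    intro π
    have hprod : (∏ i, A (eS (π i)) i * d (eS (π i))) =
        (∏ i, A (eS (π i)) i) * ∏ e ∈ S.1, d e := by
      rw [Finset.prod_mul_distrib]
      congr 1
      rw [Equiv.prod_comp π (fun i => d (eS i))]
      rw [← Finset.prod_coe_sort S.1 d]
      exact Equiv.prod_comp eS (fun s => d s.1)
    have hdet : (Matrix.of fun i j => A (eS (π i)) j).det =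
        ((Equiv.Perm.sign π : ℤ) : ℝ) * B.det := by
      have h3 : (Matrix.of fun i j => A (eS (π i)) j) = B.submatrix π id := rfl
      rw [h3, Matrix.det_permute]
    rw [ht]
    dsimp only
    rw [hprod, hdet]
    have hBentry : ∀ i, A (eS (π i)) i = B (π i) i := fun i => rfl
    simp only [hBentry]
    ring
  rw [Finset.sum_congr rfl fun π _ => hterm π, ← Finset.mul_sum]
  have hdetB : ∑ π : Equiv.Perm (Fin m), ((Equiv.Perm.sign π : ℤ) : ℝ) * ∏ i, B (π i) i
      = B.det := by
    rw [Matrix.det_apply]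
    refine Finset.sum_congr rfl fun π _ => ?_
    rw [Units.smul_def, zsmul_eq_mul]
  rw [hdetB]
  ring
end CB

section Minors
open Classical

variable {V E : Type*} [Fintype V] [Fintype E] [DecidableEq V] [DecidableEq E]
variable {head tail : E → V}

theorem int_det_pm_one {n : ℕ} (M : Matrix (Fin n) (Fin n) ℤ)
    (hinj : ∀ c, M.mulVec c = 0 → c = 0)
    (hsurj : ∀ i₀ : Fin n, ∃ c, M.mulVec c = Pi.single i₀ 1) :
    M.det = 1 ∨ M.det = -1 := by
  set L := Matrix.toLin' M with hL
  have hLinj : Function.Injective L := by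
    rw [← LinearMap.ker_eq_bot, eq_bot_iff]
    intro c hc
    have : M.mulVec c = 0 := by
      have := LinearMap.mem_ker.mp hc
      rwa [hL, Matrix.toLin'_apply] at this
    simp [hinj c this]
  have hLsurj : Function.Surjective L := by
    rw [← LinearMap.range_eq_top, eq_top_iff]
    intro b _
    have hsingle : ∀ i : Fin n, (fun j => if i = j then (1:ℤ) else 0) ∈ LinearMap.range L := by
      intro i
      obtain ⟨c, hc⟩ := hsurj i
      refine ⟨c, ?_⟩
      rw [hL, Matrix.toLin'_apply, hc]
      funext j
      simp [Pi.single_apply, eq_comm]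
    rw [pi_eq_sum_univ b]
    exact Submodule.sum_mem _ fun i _ => Submodule.smul_mem _ _ (hsingle i)
  have hunit : IsUnit (LinearMap.det L) := by
    have h1 := LinearEquiv.isUnit_det' (LinearEquiv.ofBijective L ⟨hLinj, hLsurj⟩)
    have h2 : ((LinearEquiv.ofBijective L ⟨hLinj, hLsurj⟩) :
        (Fin n → ℤ) →ₗ[ℤ] (Fin n → ℤ)) = L := rfl
    rwa [h2] at h1
  rw [hL, LinearMap.det_toLin'] at hunit
  exact Int.isUnit_iff.mp hunit

theorem cut_minor_tree {n : ℕ} (κ : Fin n → E → ℤ)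
    (hκ_indep : LinearIndependent ℤ κ)
    (hκ_span : Submodule.span ℤ (Set.range κ) = LinearMap.range (cobd head tail))
    {S : Finset E} (hS : S.card = n) (hT : IsSpanningTree head tail S) :
    (Matrix.of fun i j => κ j (fsEquiv S hS i)).det = 1 ∨
    (Matrix.of fun i j => κ j (fsEquiv S hS i)).det = -1 := by
  set eS := fsEquiv S hS with heS
  set M : Matrix (Fin n) (Fin n) ℤ := Matrix.of fun i j => κ j (eS i) with hM
  have hmv : ∀ (c : Fin n → ℤ) (i : Fin n),
      M.mulVec c i = (∑ j, c j • κ j) (eS i : E) := by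
    intro c i
    simp only [Matrix.mulVec, dotProduct, hM, Matrix.of_apply, Finset.sum_apply,
      Pi.smul_apply, smul_eq_mul]
    exact Finset.sum_congr rfl fun j _ => mul_comm _ _
  apply int_det_pm_one
  · intro c hc
    set w : E → ℤ := ∑ j, c j • κ j with hw
    have hwspan : w ∈ Submodule.span ℤ (Set.range κ) :=
      Submodule.sum_mem _ fun j _ => Submodule.smul_mem _ _
        (Submodule.subset_span (Set.mem_range_self j))
    rw [hκ_span] at hwspan
    obtain ⟨f, hf⟩ := hwspan
    have hwS : ∀ e ∈ S, w e = 0 := by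
      intro e he
      have h3 : w e = M.mulVec c ((fsEquiv S hS).symm ⟨e, he⟩) := by
        rw [hmv]; simp [heS, hw, Finset.sum_apply]
      rw [h3, hc]; rfl
    have hfc : ∀ e ∈ S, f (head e) = f (tail e) := by
      intro e he
      have : f (head e) - f (tail e) = 0 := by
        have := hwS e he
        rw [← hf] at this
        exact this
      linarith [this]
    have hconst : ∀ v w' : V, f v = f w' := fun v w' => conn_constOn hfc (hT.2 v w')
    have hw0 : w = 0 := by
      funext e
      rw [← hf]
      show f (head e) - f (tail e) = 0
      rw [hconst (head e) (tail e), sub_self]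
    have hsum0 : ∑ j, c j • κ j = 0 := by rw [← hw]; exact hw0
    exact funext (Fintype.linearIndependent_iff.mp hκ_indep c hsum0)
  · intro i₀
    obtain ⟨f, hf⟩ := fund_cut hT (eS i₀).2
    have hmem : cobd head tail f ∈ Submodule.span ℤ (Set.range κ) := by
      rw [hκ_span]; exact ⟨f, rfl⟩
    obtain ⟨c, hc⟩ := (Submodule.mem_span_range_iff_exists_fun ℤ).mp hmem
    refine ⟨c, funext fun i => ?_⟩
    rw [hmv, hc, hf _ (eS i).2]
    have hiff : ((eS i : E) = (eS i₀ : E)) ↔ i = i₀ := by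
      constructor
      · intro h; exact eS.injective (Subtype.ext h)
      · intro h; rw [h]
    by_cases h : i = i₀
    · subst h; rw [if_pos rfl, Pi.single_apply, if_pos rfl]
    · rw [if_neg (fun h' => h (hiff.mp h')), Pi.single_apply, if_neg (fun h' => h h')]

theorem cut_minor_nontree {n : ℕ} (κ : Fin n → E → ℤ)
    (hκ_span : Submodule.span ℤ (Set.range κ) = LinearMap.range (cobd head tail))
    (hconn : ∀ v w : V, Conn head tail (Finset.univ : Finset E) v w)
    {S : Finset E} (hS : S.card = n) (hcard : S.card + 1 = Fintype.card V)
    (hnt : ¬ IsSpanningTree head tail S) :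
    (Matrix.of fun i j => ((κ j (fsEquiv S hS i) : ℤ) : ℝ)).det = 0 := by
  set eS := fsEquiv S hS with heS
  have hnc : ¬ ∀ v w : V, Conn head tail S v w := fun h => hnt ⟨hcard, h⟩
  push_neg at hnc
  obtain ⟨v₀, w₀, hvw⟩ := hnc
  set f : V → ℤ := fun v => if Conn head tail S v₀ v then 1 else 0 with hfdef
  set w : E → ℤ := cobd head tail f with hw
  have hwS : ∀ e ∈ S, w e = 0 := by
    intro e he
    have hstep : Conn head tail S (head e) (tail e) :=
      Relation.ReflTransGen.single ⟨e, he, Or.inl ⟨rfl, rfl⟩⟩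
    show f (head e) - f (tail e) = 0
    have hiff : Conn head tail S v₀ (head e) ↔ Conn head tail S v₀ (tail e) :=
      ⟨fun hc => hc.trans hstep, fun hc => hc.trans (conn_symm hstep)⟩
    rw [hfdef]
    by_cases hc : Conn head tail S v₀ (head e)
    · simp only [if_pos hc, if_pos (hiff.mp hc), sub_self]
    · simp only [if_neg hc, if_neg (fun h => hc (hiff.mpr h)), sub_self]
  have hwne : w ≠ 0 := by
    intro h0
    have hfc : ∀ e ∈ (Finset.univ : Finset E), f (head e) = f (tail e) := by
      intro e _
      have : w e = 0 := by rw [h0]; rfl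
      have h2 : f (head e) - f (tail e) = 0 := this
      linarith
    have := conn_constOn hfc (hconn v₀ w₀)
    rw [hfdef] at this
    have hrefl : Conn head tail S v₀ v₀ := Relation.ReflTransGen.refl
    simp only [if_pos hrefl, if_neg hvw] at this
    exact one_ne_zero this
  have hmem : w ∈ Submodule.span ℤ (Set.range κ) := by
    rw [hκ_span]; exact ⟨f, rfl⟩
  obtain ⟨c, hc⟩ := (Submodule.mem_span_range_iff_exists_fun ℤ).mp hmem
  have hcne : c ≠ 0 := by
    intro h0
    apply hwne
    rw [← hc, h0]
    simp
  apply Matrix.exists_mulVec_eq_zero_iff.mp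
  refine ⟨fun j => (c j : ℝ), ?_, ?_⟩
  · intro h0
    apply hcne
    funext j
    have h1 : ((c j : ℤ) : ℝ) = 0 := by simpa using congrFun h0 j
    exact_mod_cast h1
  · funext i
    show ∑ j, ((κ j (eS i) : ℤ) : ℝ) * (c j : ℝ) = 0
    have hint : ∑ j, c j * κ j (eS i) = w (eS i : E) := by
      rw [← hc]
      simp [Finset.sum_apply]
    have hze : w (eS i : E) = 0 := hwS _ (eS i).2
    push_cast [← hint]
    rw [Finset.sum_congr rfl fun j _ => mul_comm ((κ j (eS i) : ℤ):ℝ) ((c j : ℤ):ℝ)]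
    exact_mod_cast congrArg (fun z : ℤ => (z : ℝ)) (hint.trans hze)

end Minors

section Minors2
open Classical

variable {V E : Type*} [Fintype V] [Fintype E] [DecidableEq V] [DecidableEq E]
variable {head tail : E → V}

theorem cycle_minor_tree {b₁ : ℕ} (γ : Fin b₁ → E → ℤ)
    (hγ_indep : LinearIndependent ℤ γ)
    (hγ_span : Submodule.span ℤ (Set.range γ) = LinearMap.ker (bd head tail))
    {S : Finset E} (hS : S.card = b₁) (hT : IsSpanningTree head tail Sᶜ) :
    (Matrix.of fun i j => γ j (fsEquiv S hS i)).det = 1 ∨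
    (Matrix.of fun i j => γ j (fsEquiv S hS i)).det = -1 := by
  set eS := fsEquiv S hS with heS
  set M : Matrix (Fin b₁) (Fin b₁) ℤ := Matrix.of fun i j => γ j (eS i) with hM
  have hmv : ∀ (c : Fin b₁ → ℤ) (i : Fin b₁),
      M.mulVec c i = (∑ j, c j • γ j) (eS i : E) := by
    intro c i
    simp only [Matrix.mulVec, dotProduct, hM, Matrix.of_apply, Finset.sum_apply,
      Pi.smul_apply, smul_eq_mul]
    exact Finset.sum_congr rfl fun j _ => mul_comm _ _
  apply int_det_pm_one
  · intro c hc
    set z : E → ℤ := ∑ j, c j • γ j with hz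
    have hzker : z ∈ LinearMap.ker (bd head tail) := by
      rw [← hγ_span]
      exact Submodule.sum_mem _ fun j _ => Submodule.smul_mem _ _
        (Submodule.subset_span (Set.mem_range_self j))
    have hbdz : bd head tail z = 0 := LinearMap.mem_ker.mp hzker
    have hzS : ∀ e ∈ S, z e = 0 := by
      intro e he
      have h3 : z e = M.mulVec c ((fsEquiv S hS).symm ⟨e, he⟩) := by
        rw [hmv]; simp [heS, hz, Finset.sum_apply]
      rw [h3, hc]; rfl
    have hzT : ∀ e₀ ∈ Sᶜ, z e₀ = 0 := by
      intro e₀ he₀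
      obtain ⟨f, hf⟩ := fund_cut hT he₀
      have hadj := adjoint_sum (head := head) (tail := tail) z f
      rw [show (∑ v, bd head tail z v * f v) = 0 by
        rw [hbdz]; simp] at hadj
      have hsingle : ∑ e, z e * (f (head e) - f (tail e)) = z e₀ := by
        rw [Finset.sum_eq_single e₀]
        · have := hf e₀ he₀
          have h4 : f (head e₀) - f (tail e₀) = 1 := by
            have h5 : cobd head tail f e₀ = 1 := by rw [this, if_pos rfl]
            exact h5
          rw [h4, mul_one]
        · intro e _ hne
          by_cases heS' : e ∈ S
          · rw [hzS e heS', zero_mul]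
          · have heC : e ∈ Sᶜ := Finset.mem_compl.mpr heS'
            have h5 : cobd head tail f e = 0 := by rw [hf e heC, if_neg hne]
            have h6 : f (head e) - f (tail e) = 0 := h5
            rw [h6, mul_zero]
        · intro h; exact absurd (Finset.mem_univ e₀) h
      rw [hsingle] at hadj
      exact hadj
    have hz0 : z = 0 := by
      funext e
      by_cases he : e ∈ S
      · exact hzS e he
      · exact hzT e (Finset.mem_compl.mpr he)
    have hsum0 : ∑ j, c j • γ j = 0 := by rw [← hz]; exact hz0
    exact funext (Fintype.linearIndependent_iff.mp hγ_indep c hsum0)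
  · intro i₀
    set e₀ : E := (eS i₀ : E) with he₀def
    have he₀ : e₀ ∈ S := (eS i₀).2
    have he₀c : e₀ ∉ Sᶜ := by simp [he₀]
    have hconnT : Conn head tail Sᶜ (head e₀) (tail e₀) := hT.2 _ _
    obtain ⟨z₀, hz₀supp, hbd₀⟩ := conn_chain hconnT
    set z : E → ℤ := (fun e => if e = e₀ then 1 else 0) + z₀ with hzdef
    have hbdz : bd head tail z = 0 := by
      rw [hzdef, map_add, bd_single, hbd₀]
      funext v
      simp only [Pi.add_apply, Pi.zero_apply]
      ring
    have hzker : z ∈ Submodule.span ℤ (Set.range γ) := by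
      rw [hγ_span]
      exact LinearMap.mem_ker.mpr hbdz
    obtain ⟨c, hc⟩ := (Submodule.mem_span_range_iff_exists_fun ℤ).mp hzker
    refine ⟨c, funext fun i => ?_⟩
    rw [hmv, hc]
    have hz₀e : z₀ (eS i : E) = 0 := hz₀supp _ (by simp [(eS i).2])
    rw [hzdef]
    simp only [Pi.add_apply, hz₀e, add_zero]
    have hiff : ((eS i : E) = e₀) ↔ i = i₀ := by
      constructor
      · intro h; exact eS.injective (Subtype.ext h)
      · intro h; rw [h, he₀def]
    by_cases h : i = i₀
    · subst h; rw [if_pos (hiff.mpr rfl), Pi.single_apply, if_pos rfl]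
    · rw [if_neg (fun h' => h (hiff.mp h')), Pi.single_apply, if_neg h]

theorem cycle_minor_nontree {b₁ : ℕ} (γ : Fin b₁ → E → ℤ)
    (hγ_span : Submodule.span ℤ (Set.range γ) = LinearMap.ker (bd head tail))
    (hconn : ∀ v w : V, Conn head tail (Finset.univ : Finset E) v w)
    {S : Finset E} (hS : S.card = b₁) (hcard : Sᶜ.card + 1 = Fintype.card V)
    (hnt : ¬ IsSpanningTree head tail Sᶜ) :
    (Matrix.of fun i j => ((γ j (fsEquiv S hS i) : ℤ) : ℝ)).det = 0 := by
  set eS := fsEquiv S hS with heS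
  set M : Matrix (Fin b₁) (Fin b₁) ℝ := Matrix.of fun i j => ((γ j (eS i) : ℤ) : ℝ) with hM
  by_contra hdet
  have hnc : ¬ ∀ v w : V, Conn head tail Sᶜ v w := fun h => hnt ⟨hcard, h⟩
  push_neg at hnc
  obtain ⟨v₀, w₀, hvw⟩ := hnc
  set f : V → ℤ := fun v => if Conn head tail Sᶜ v₀ v then 1 else 0 with hfdef
  set w : E → ℤ := cobd head tail f with hw
  have hwT : ∀ e ∈ Sᶜ, w e = 0 := by
    intro e he
    have hstep : Conn head tail Sᶜ (head e) (tail e) :=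
      Relation.ReflTransGen.single ⟨e, he, Or.inl ⟨rfl, rfl⟩⟩
    show f (head e) - f (tail e) = 0
    have hiff : Conn head tail Sᶜ v₀ (head e) ↔ Conn head tail Sᶜ v₀ (tail e) :=
      ⟨fun hc => hc.trans hstep, fun hc => hc.trans (conn_symm hstep)⟩
    rw [hfdef]
    by_cases hc : Conn head tail Sᶜ v₀ (head e)
    · simp only [if_pos hc, if_pos (hiff.mp hc), sub_self]
    · simp only [if_neg hc, if_neg (fun h => hc (hiff.mpr h)), sub_self]
  have hwne : w ≠ 0 := by
    intro h0
    have hfc : ∀ e ∈ (Finset.univ : Finset E), f (head e) = f (tail e) := by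
      intro e _
      have h2 : f (head e) - f (tail e) = 0 := by
        have : w e = 0 := by rw [h0]; rfl
        exact this
      linarith
    have := conn_constOn hfc (hconn v₀ w₀)
    rw [hfdef] at this
    have hrefl : Conn head tail Sᶜ v₀ v₀ := Relation.ReflTransGen.refl
    simp only [if_pos hrefl, if_neg hvw] at this
    exact one_ne_zero this
  -- solve the linear system
  have hdetunit : IsUnit M.det := isUnit_iff_ne_zero.mpr hdet
  set b : Fin b₁ → ℝ := fun i => ((w (eS i : E) : ℤ) : ℝ) with hb
  set c : Fin b₁ → ℝ := M⁻¹.mulVec b with hcdef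
  have hMc : M.mulVec c = b := by
    rw [hcdef, Matrix.mulVec_mulVec, Matrix.mul_nonsing_inv M hdetunit, Matrix.one_mulVec]
  set z : E → ℝ := fun e => ∑ i, c i * ((γ i e : ℤ) : ℝ) with hzdef
  have hzS : ∀ e ∈ S, z e = ((w e : ℤ) : ℝ) := by
    intro e he
    have h3 : z e = M.mulVec c ((fsEquiv S hS).symm ⟨e, he⟩) := by
      simp only [Matrix.mulVec, dotProduct, hM, Matrix.of_apply, hzdef, heS,
        Equiv.apply_symm_apply]
      exact Finset.sum_congr rfl fun j _ => mul_comm _ _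
    rw [h3, hMc, hb]
    simp [heS]
  have horth : ∀ i, (∑ e, ((γ i e : ℤ) : ℝ) * ((w e : ℤ) : ℝ)) = 0 := by
    intro i
    have hker : bd head tail (γ i) = 0 := by
      have : γ i ∈ LinearMap.ker (bd head tail) := by
        rw [← hγ_span]
        exact Submodule.subset_span (Set.mem_range_self i)
      exact LinearMap.mem_ker.mp this
    have hint : ∑ e, γ i e * w e = 0 := by
      have hadj := adjoint_sum (head := head) (tail := tail) (γ i) f
      rw [show (∑ v, bd head tail (γ i) v * f v) = 0 by rw [hker]; simp] at hadj
      rw [← hadj]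
      rfl
    have : ((∑ e, γ i e * w e : ℤ) : ℝ) = 0 := by rw [hint]; norm_num
    push_cast at this
    exact this
  have hkey : ∑ e, ((w e : ℤ) : ℝ) * z e = 0 := by
    rw [hzdef]
    simp only [Finset.mul_sum]
    rw [Finset.sum_comm]
    rw [show (0:ℝ) = ∑ i : Fin b₁, c i * 0 by simp]
    refine Finset.sum_congr rfl fun i _ => ?_
    rw [← horth i, Finset.mul_sum]
    congr 1
    funext e
    ring
  have hkey2 : ∑ e ∈ S, ((w e : ℤ) : ℝ) ^ 2 = 0 := by
    have h4 : ∑ e, ((w e : ℤ) : ℝ) * z e = ∑ e ∈ S, ((w e : ℤ) : ℝ) * z e := by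
      symm
      apply Finset.sum_subset (Finset.subset_univ S)
      intro e _ he
      rw [hwT e (Finset.mem_compl.mpr he)]
      norm_num
    rw [h4] at hkey
    rw [← hkey]
    refine Finset.sum_congr rfl fun e he => ?_
    rw [hzS e he]
    ring
  have hwS0 : ∀ e ∈ S, w e = 0 := by
    intro e he
    have h5 := (Finset.sum_eq_zero_iff_of_nonneg
      (fun e _ => sq_nonneg ((w e : ℤ) : ℝ))).mp hkey2 e he
    have h6 : ((w e : ℤ) : ℝ) = 0 := by
      exact pow_eq_zero_iff (n := 2) (by norm_num) |>.mp h5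
    exact_mod_cast h6
  apply hwne
  funext e
  by_cases he : e ∈ S
  · exact hwS0 e he
  · exact hwT e (Finset.mem_compl.mpr he)

end Minors2


/-- **Cycle–cut torus volume identity.**
Let `(γ₁,…,γ_{b₁})` be an integral basis of the cycle group and `(κ₁,…,κ_{|V|−1})` an
integral basis of the cut group.  In the top exterior power of `C¹(G,ℝ)` (computed in
the dual edge basis, via the coordinate matrix `N` of the vectors
`J_x γ₁,…,J_x γ_{b₁}, κ₁,…,κ_{|V|−1}` with `J_x : e ↦ x_e⁻¹ e*`, for any indexing `σ`):
`J_xγ₁ ∧ … ∧ J_xγ_{b₁} ∧ κ₁ ∧ … ∧ κ_{|V|−1} = ± (Π_e x_e)⁻¹ (Σ_T Π_{e∈T} x_e) e*_{E⁺}`,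
i.e. `det N = ± (Π_e x_e)⁻¹ Σ_T x^T`; and the norm of the left-hand side (for the inner
product with `⟨e*,e*⟩ = x_e`, whose Gram matrix is `Nᵀ (diag x) N`) equals
`(Π_e x_e)^{-1/2} Σ_T x^T`. -/
theorem cycle_cut_torus_volume
    {V E : Type*} [Fintype V] [Fintype E] [DecidableEq V] [DecidableEq E]
    (head tail : E → V)
    (hconn : ∀ v w : V, Conn head tail (Finset.univ : Finset E) v w)
    (x : E → ℝ) (hx : ∀ e, 0 < x e)
    (b₁ n : ℕ) (hb₁ : b₁ + Fintype.card V = Fintype.card E + 1)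
    (hn : n + 1 = Fintype.card V)
    (γ : Fin b₁ → (E → ℤ))
    (hγ_indep : LinearIndependent ℤ γ)
    (hγ_span : Submodule.span ℤ (Set.range γ) = LinearMap.ker (bd head tail))
    (κ : Fin n → (E → ℤ))
    (hκ_indep : LinearIndependent ℤ κ)
    (hκ_span : Submodule.span ℤ (Set.range κ) = LinearMap.range (cobd head tail))
    (σ : (Fin b₁ ⊕ Fin n) ≃ E) :
    ∃ ε : ℝ, (ε = 1 ∨ ε = -1) ∧
      (Matrix.of fun e c : E =>
          Sum.elim (fun i => (x e)⁻¹ * (γ i e : ℝ)) (fun j => (κ j e : ℝ))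
            (σ.symm c)).det =
        ε * (∏ e : E, x e)⁻¹ *
          (∑ T : Finset E,
            if IsSpanningTree head tail T then ∏ e ∈ T, x e else 0) ∧
      Real.sqrt
        (((Matrix.of fun e c : E =>
            Sum.elim (fun i => (x e)⁻¹ * (γ i e : ℝ)) (fun j => (κ j e : ℝ))
              (σ.symm c)).transpose *
          Matrix.diagonal x *
          (Matrix.of fun e c : E =>
            Sum.elim (fun i => (x e)⁻¹ * (γ i e : ℝ)) (fun j => (κ j e : ℝ))
              (σ.symm c))).det) =
        Real.sqrt ((∏ e : E, x e)⁻¹) *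
          (∑ T : Finset E,
            if IsSpanningTree head tail T then ∏ e ∈ T, x e else 0) := by
  
  classical
  set N : Matrix E E ℝ := Matrix.of fun e c : E =>
      Sum.elim (fun i => (x e)⁻¹ * (γ i e : ℝ)) (fun j => (κ j e : ℝ)) (σ.symm c) with hN
  set A₁ : Matrix E (Fin b₁) ℝ := Matrix.of fun e i => (x e)⁻¹ * (γ i e : ℝ) with hA₁
  set A₂ : Matrix E (Fin n) ℝ := Matrix.of fun e j => (κ j e : ℝ) with hA₂
  set M : Matrix E (Fin b₁ ⊕ Fin n) ℝ := Matrix.of fun e c =>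
      Sum.elim (fun i => (x e)⁻¹ * (γ i e : ℝ)) (fun j => (κ j e : ℝ)) c with hM
  set Sg : ℝ := ∑ T : Finset E,
      if IsSpanningTree head tail T then ∏ e ∈ T, x e else 0 with hSg
  have hprod_pos : 0 < ∏ e : E, x e := Finset.prod_pos fun e _ => hx e
  have hSg_nonneg : 0 ≤ Sg := by
    rw [hSg]
    refine Finset.sum_nonneg fun T _ => ?_
    by_cases h : IsSpanningTree head tail T
    · rw [if_pos h]; exact le_of_lt (Finset.prod_pos fun e _ => hx e)
    · rw [if_neg h]
  have hEcard : Fintype.card E = b₁ + n := by omega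
  have hcast : ∀ {k : ℕ} (B : Matrix (Fin k) (Fin k) ℤ),
      (B.map (Int.cast : ℤ → ℝ)).det = ((B.det : ℤ) : ℝ) := by
    intro k B
    have h1 := RingHom.map_det (Int.castRingHom ℝ) B
    rw [RingHom.mapMatrix_apply] at h1
    simpa using h1.symm
  -- orthogonality
  have horth : ∀ (i : Fin b₁) (j : Fin n), ∑ e, (γ i e : ℝ) * (κ j e : ℝ) = 0 := by
    intro i j
    have hκmem : κ j ∈ LinearMap.range (cobd head tail) := by
      rw [← hκ_span]; exact Submodule.subset_span (Set.mem_range_self j)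
    obtain ⟨f, hf⟩ := hκmem
    have hker : bd head tail (γ i) = 0 := by
      have : γ i ∈ LinearMap.ker (bd head tail) := by
        rw [← hγ_span]; exact Submodule.subset_span (Set.mem_range_self i)
      exact LinearMap.mem_ker.mp this
    have hint : ∑ e, γ i e * κ j e = 0 := by
      have hadj := adjoint_sum (head := head) (tail := tail) (γ i) f
      rw [show (∑ v, bd head tail (γ i) v * f v) = 0 by rw [hker]; simp] at hadj
      rw [← hadj]
      refine Finset.sum_congr rfl fun e _ => ?_
      rw [← hf]
      rfl
    have h2 : ((∑ e, γ i e * κ j e : ℤ) : ℝ) = 0 := by rw [hint]; norm_num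
    push_cast at h2
    exact h2
  -- step 1 : reindex
  have hGram : (N.transpose * Matrix.diagonal x * N).det =
      (M.transpose * Matrix.diagonal x * M).det := by
    have hsub : N.transpose * Matrix.diagonal x * N =
        (M.transpose * Matrix.diagonal x * M).submatrix ⇑σ.symm ⇑σ.symm := by
      ext c c'
      simp only [Matrix.submatrix_apply, Matrix.mul_apply, Matrix.mul_diagonal,
        Matrix.transpose_apply, Matrix.diagonal_apply, mul_ite, mul_zero, ite_mul, zero_mul,
        Finset.sum_ite_eq, Finset.sum_ite_eq', Finset.mem_univ, if_true]
      rfl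
    rw [hsub, Matrix.det_submatrix_equiv_self]
  -- step 2 : block diagonal
  have hblock : M.transpose * Matrix.diagonal x * M =
      Matrix.fromBlocks (A₁.transpose * Matrix.diagonal x * A₁) 0 0
        (A₂.transpose * Matrix.diagonal x * A₂) := by
    have hentry : ∀ (P Q : Matrix E (Fin b₁ ⊕ Fin n) ℝ) (c c' : Fin b₁ ⊕ Fin n),
        (P.transpose * Matrix.diagonal x * Q) c c' = ∑ e, P e c * x e * Q e c' := by
      intro P Q c c'
      simp only [Matrix.mul_apply, Matrix.mul_diagonal, Matrix.transpose_apply,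
        Matrix.diagonal_apply, mul_ite, mul_zero, ite_mul, zero_mul,
        Finset.sum_ite_eq, Finset.sum_ite_eq', Finset.mem_univ, if_true]
    ext c c'
    cases c with
    | inl i =>
      cases c' with
      | inl i' =>
        rw [hentry]
        show _ = (A₁.transpose * Matrix.diagonal x * A₁) i i'
        rw [show (A₁.transpose * Matrix.diagonal x * A₁) i i' = ∑ e, A₁ e i * x e * A₁ e i' by
          simp only [Matrix.mul_apply, Matrix.mul_diagonal, Matrix.transpose_apply,
            Matrix.diagonal_apply, mul_ite, mul_zero, ite_mul, zero_mul,
            Finset.sum_ite_eq, Finset.sum_ite_eq', Finset.mem_univ, if_true]]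
        rfl
      | inr j =>
        rw [hentry]
        show (∑ e, ((x e)⁻¹ * (γ i e : ℝ)) * x e * (κ j e : ℝ)) = 0
        rw [← horth i j]
        refine Finset.sum_congr rfl fun e _ => ?_
        field_simp [(hx e).ne']
    | inr j =>
      cases c' with
      | inl i =>
        rw [hentry]
        show (∑ e, (κ j e : ℝ) * x e * ((x e)⁻¹ * (γ i e : ℝ))) = 0
        rw [← horth i j]
        refine Finset.sum_congr rfl fun e _ => ?_
        field_simp [(hx e).ne']
      | inr j' =>
        rw [hentry]
        show _ = (A₂.transpose * Matrix.diagonal x * A₂) j j'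
        rw [show (A₂.transpose * Matrix.diagonal x * A₂) j j' = ∑ e, A₂ e j * x e * A₂ e j' by
          simp only [Matrix.mul_apply, Matrix.mul_diagonal, Matrix.transpose_apply,
            Matrix.diagonal_apply, mul_ite, mul_zero, ite_mul, zero_mul,
            Finset.sum_ite_eq, Finset.sum_ite_eq', Finset.mem_univ, if_true]]
        rfl
  -- step 4 : det G₂ = Sg
  have hgen : ∀ (g : Finset E → ℝ), (∀ T, g T ≠ 0 → T.card = n) →
      ∑ T : Finset E, g T = ∑ S : {S : Finset E // S.card = n}, g S.1 := by
    intro g hg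
    rw [← Finset.sum_filter_of_ne (fun T _ h => hg T h)]
    exact Finset.sum_subtype _ (by simp) g
  have hSg_subtype : Sg = ∑ S : {S : Finset E // S.card = n},
      (if IsSpanningTree head tail S.1 then ∏ e ∈ S.1, x e else 0) := by
    rw [hSg]
    refine hgen _ ?_
    intro T hT
    by_cases h : IsSpanningTree head tail T
    · have := h.1; omega
    · rw [if_neg h] at hT; exact absurd rfl hT
  have hG₂ : (A₂.transpose * Matrix.diagonal x * A₂).det = Sg := by
    rw [cauchy_binet n A₂ x, hSg_subtype]
    refine Finset.sum_congr rfl fun S _ => ?_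
    have hmat : (Matrix.of fun i j => A₂ (fsEquiv S.1 S.2 i) j) =
        (Matrix.of fun i j => κ j (fsEquiv S.1 S.2 i)).map (Int.cast : ℤ → ℝ) := by
      ext i j; rfl
    by_cases h : IsSpanningTree head tail S.1
    · rw [if_pos h]
      have hdet := cut_minor_tree κ hκ_indep hκ_span S.2 h
      have hdet2 : ((Matrix.of fun i j => A₂ (fsEquiv S.1 S.2 i) j).det) ^ 2 = 1 := by
        rw [hmat, hcast]
        rcases hdet with h1 | h1 <;> rw [h1] <;> norm_num
      rw [hdet2, mul_one]
    · rw [if_neg h]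
      have hcard : S.1.card + 1 = Fintype.card V := by rw [S.2]; omega
      have hdet := cut_minor_nontree κ hκ_span hconn S.2 hcard h
      have hdet2 : (Matrix.of fun i j => A₂ (fsEquiv S.1 S.2 i) j).det = 0 := hdet
      rw [hdet2]
      norm_num
  -- step 5 : det G₁ = (∏ x)⁻¹ * Sg
  have hG₁ : (A₁.transpose * Matrix.diagonal x * A₁).det = (∏ e : E, x e)⁻¹ * Sg := by
    rw [cauchy_binet b₁ A₁ x]
    have hterm : ∀ S : {S : Finset E // S.card = b₁},
        (∏ e ∈ S.1, x e) * (Matrix.det (Matrix.of fun i j => A₁ (fsEquiv S.1 S.2 i) j)) ^ 2 =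
        (if IsSpanningTree head tail S.1ᶜ then (∏ e ∈ S.1, x e)⁻¹ else 0) := by
      intro S
      have hmat : (Matrix.of fun i j => A₁ (fsEquiv S.1 S.2 i) j) =
          Matrix.of (fun i j => (x (fsEquiv S.1 S.2 i : E))⁻¹ *
            ((Matrix.of fun i j => γ j (fsEquiv S.1 S.2 i)).map (Int.cast : ℤ → ℝ)) i j) := by
        ext i j; rfl
      have hscale : (Matrix.of fun i j => A₁ (fsEquiv S.1 S.2 i) j).det =
          (∏ i, (x (fsEquiv S.1 S.2 i : E))⁻¹) *
            ((Matrix.of fun i j => γ j (fsEquiv S.1 S.2 i)).map (Int.cast : ℤ → ℝ)).det := by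
        rw [hmat, Matrix.det_mul_column]
      have hprodS : (∏ i, (x (fsEquiv S.1 S.2 i : E))⁻¹) = (∏ e ∈ S.1, x e)⁻¹ := by
        rw [← Finset.prod_inv_distrib]
        rw [← Finset.prod_coe_sort S.1 (fun e => (x e)⁻¹)]
        exact Equiv.prod_comp (fsEquiv S.1 S.2) (fun s => (x s.1)⁻¹)
      have hcompl_card : (S.1ᶜ).card + 1 = Fintype.card V := by
        rw [Finset.card_compl, S.2]
        omega
      by_cases h : IsSpanningTree head tail S.1ᶜ
      · rw [if_pos h]
        have hdet := cycle_minor_tree γ hγ_indep hγ_span S.2 h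
        have hdet2 : (((Matrix.of fun i j => γ j (fsEquiv S.1 S.2 i)).map
            (Int.cast : ℤ → ℝ)).det) ^ 2 = 1 := by
          rw [hcast]
          rcases hdet with h1 | h1 <;> rw [h1] <;> norm_num
        rw [hscale, hprodS, mul_pow, hdet2, mul_one]
        have hne : (∏ e ∈ S.1, x e) ≠ 0 :=
          ne_of_gt (Finset.prod_pos fun e _ => hx e)
        field_simp
      · rw [if_neg h]
        have hdet := cycle_minor_nontree γ hγ_span hconn S.2 hcompl_card h
        have hdet2 : (((Matrix.of fun i j => γ j (fsEquiv S.1 S.2 i)).map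
            (Int.cast : ℤ → ℝ)).det) = 0 := hdet
        rw [hscale, hdet2]
        ring
    rw [Finset.sum_congr rfl fun S _ => hterm S]
    -- reindex by complement
    let cEquiv : {S : Finset E // S.card = b₁} ≃ {S : Finset E // S.card = n} :=
      { toFun := fun S => ⟨S.1ᶜ, by rw [Finset.card_compl, S.2, hEcard]; omega⟩
        invFun := fun S => ⟨S.1ᶜ, by rw [Finset.card_compl, S.2, hEcard]; omega⟩
        left_inv := fun S => Subtype.ext (compl_compl S.1)
        right_inv := fun S => Subtype.ext (compl_compl S.1) }
    rw [← Equiv.sum_comp cEquiv.symm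
      (fun S : {S : Finset E // S.card = b₁} =>
        if IsSpanningTree head tail S.1ᶜ then (∏ e ∈ S.1, x e)⁻¹ else 0)]
    have hsimp : ∀ T : {S : Finset E // S.card = n},
        (if IsSpanningTree head tail ((cEquiv.symm T).1)ᶜ then
          (∏ e ∈ (cEquiv.symm T).1, x e)⁻¹ else 0) =
        (∏ e : E, x e)⁻¹ * (if IsSpanningTree head tail T.1 then ∏ e ∈ T.1, x e else 0) := by
      intro T
      have h1 : ((cEquiv.symm T).1)ᶜ = T.1 := compl_compl T.1
      have h2 : (cEquiv.symm T).1 = T.1ᶜ := rfl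
      rw [h1, h2]
      by_cases h : IsSpanningTree head tail T.1
      · rw [if_pos h, if_pos h]
        have hsplit : (∏ e ∈ T.1, x e) * (∏ e ∈ T.1ᶜ, x e) = ∏ e : E, x e :=
          Finset.prod_mul_prod_compl T.1 x
        have hTpos : 0 < ∏ e ∈ T.1, x e := Finset.prod_pos fun e _ => hx e
        have hTcpos : 0 < ∏ e ∈ T.1ᶜ, x e := Finset.prod_pos fun e _ => hx e
        field_simp
        nlinarith [hsplit]
      · rw [if_neg h, if_neg h, mul_zero]
    rw [Finset.sum_congr rfl fun T _ => hsimp T, ← Finset.mul_sum, hSg_subtype]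
  -- combine
  have hdetGram : (N.transpose * Matrix.diagonal x * N).det =
      (∏ e : E, x e)⁻¹ * Sg * Sg := by
    rw [hGram, hblock, Matrix.det_fromBlocks_zero₂₁, hG₁, hG₂]
  have hdetN : (N.transpose * Matrix.diagonal x * N).det =
      N.det * N.det * (∏ e : E, x e) := by
    rw [Matrix.det_mul, Matrix.det_mul, Matrix.det_transpose, Matrix.det_diagonal]
    ring
  set r : ℝ := (∏ e : E, x e)⁻¹ * Sg with hr
  have hsq : N.det * N.det = r * r := by
    have h2 : (∏ e : E, x e) ≠ 0 := ne_of_gt hprod_pos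
    have h3 : r * r * (∏ e : E, x e) = (∏ e : E, x e)⁻¹ * Sg * Sg := by
      rw [hr]
      calc ((∏ e : E, x e)⁻¹ * Sg) * ((∏ e : E, x e)⁻¹ * Sg) * (∏ e : E, x e)
          = (∏ e : E, x e)⁻¹ * Sg * Sg * ((∏ e : E, x e)⁻¹ * (∏ e : E, x e)) := by ring
        _ = (∏ e : E, x e)⁻¹ * Sg * Sg := by rw [inv_mul_cancel₀ h2, mul_one]
    have h1 : N.det * N.det * (∏ e : E, x e) = r * r * (∏ e : E, x e) := by
      rw [← hdetN, hdetGram, h3]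
    exact mul_right_cancel₀ h2 h1
  have hcases := mul_self_eq_mul_self_iff.mp hsq
  have hnorm : Real.sqrt ((N.transpose * Matrix.diagonal x * N).det) =
      Real.sqrt ((∏ e : E, x e)⁻¹) * Sg := by
    have hinv_nonneg : (0:ℝ) ≤ (∏ e : E, x e)⁻¹ := le_of_lt (by positivity)
    have h3 : (N.transpose * Matrix.diagonal x * N).det =
        (Real.sqrt ((∏ e : E, x e)⁻¹) * Sg) ^ 2 := by
      rw [hdetGram, mul_pow, Real.sq_sqrt hinv_nonneg]
      ring
    rw [h3, Real.sqrt_sq (by positivity)]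
  rcases hcases with h | h
  · exact ⟨1, Or.inl rfl, by rw [h, hr]; ring, hnorm⟩
  · exact ⟨-1, Or.inr rfl, by rw [h, hr]; ring, hnorm⟩
end

section
/- Let E be a finite-dimensional real or complex inner product space with orthonormal basis (e_i)_{i∈S}, let H ⊆ E be a linear subspace, and let X be the determinantal random subset of S associated with the orthogonal projection P_H (so that P(J ⊆ X) = det of the compression of P_H to span(e_j : j∈J) for every J ⊆ S). Let K ⊆ S satisfy P(X ⊆ K) > 0. Then, conditioned on {X ⊆ K}, the random set X is determinantal on K, associated with the orthogonal projection onto P_{E_K}(H), the image of H under the orthogonal projection onto E_K = span(e_i : i ∈ K). -/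
open scoped InnerProductSpace

variable {𝕜 : Type*} [RCLike 𝕜]

/-- A (probability) measure `μ` on subsets of a finite set `S` is determinantal,
associated with the subspace `H` of `E` in the (orthonormal) basis `e`, if for every
`J ⊆ S` the probability that `J` is contained in the random set equals the determinant
of the compression to `J` of the matrix of the orthogonal projection onto `H`. -/
def IsDeterminantal {E : Type*} [NormedAddCommGroup E] [InnerProductSpace 𝕜 E]
    [FiniteDimensional 𝕜 E] {S : Type*} [Fintype S] [DecidableEq S]
    (e : S → E) (H : Submodule 𝕜 E) (μ : Finset S → ℝ) : Prop :=
  ∀ J : Finset S,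
    (↑(∑ B ∈ Finset.univ.filter (fun B : Finset S => J ⊆ B), μ B) : 𝕜) =
      Matrix.det (Matrix.of fun i j : J =>
        (inner 𝕜 (e i) (H.subtype (Submodule.orthogonalProjectionOnto H (e j))) : 𝕜))

section AuxDet

variable {F : Type*} [Field F] {S : Type*} [Fintype S] [DecidableEq S]

/-- Auxiliary: determinant of a matrix whose rows outside `U` are identity rows equals the
determinant of the compression to `U`. -/
lemma aux_det_delta (M : Matrix S S F) (U T : Finset S) (hUT : U ⊆ T) :
    Matrix.det (Matrix.of fun i j : ↥T =>
        if (i : S) ∈ U then M i j else if (i : S) = (j : S) then (1:F) else 0)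
      = Matrix.det (Matrix.of fun i j : ↥U => M i j) := by
  have hdisj : Disjoint (U : Set S) ((T \ U : Finset S) : Set S) := by
    rw [Set.disjoint_left]
    intro x hx hx'
    simp only [Finset.mem_coe, Finset.mem_sdiff] at hx hx'
    exact hx'.2 hx
  have hmem : ∀ x, x ∈ T ↔ x ∈ (U : Set S) ∪ ((T \ U : Finset S) : Set S) := by
    intro x
    simp only [Set.mem_union, Finset.mem_coe, Finset.mem_sdiff]
    constructor
    · intro hx; by_cases hxU : x ∈ U
      · exact Or.inl hxU
      · exact Or.inr ⟨hx, hxU⟩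
    · rintro (hx | hx)
      · exact hUT hx
      · exact hx.1
  let u : ↥T ≃ ↥U ⊕ ↥(T \ U) := (Equiv.subtypeEquivRight hmem).trans (Equiv.Set.union hdisj)
  rw [← Matrix.det_submatrix_equiv_self u.symm]
  have hval : ∀ x : ↥U ⊕ ↥(T \ U), ((u.symm x : ↥T) : S)
      = Sum.elim (fun a : ↥U => (a : S)) (fun a : ↥(T\U) => (a : S)) x := by
    rintro (a | a)
    · rfl
    · rfl
  have : (Matrix.of fun i j : ↥T =>
        if (i : S) ∈ U then M i j else if (i : S) = (j : S) then (1:F) else 0).submatrix u.symm u.symm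
      = Matrix.fromBlocks (Matrix.of fun i j : ↥U => M i j)
          (Matrix.of fun (i : ↥U) (j : ↥(T\U)) => M i j) 0 1 := by
    ext i j
    rcases i with (a | a) <;> rcases j with (b | b) <;>
      simp only [Matrix.submatrix_apply, Matrix.of_apply, hval, Sum.elim_inl, Sum.elim_inr,
        Matrix.fromBlocks_apply₁₁, Matrix.fromBlocks_apply₁₂, Matrix.fromBlocks_apply₂₁,
        Matrix.fromBlocks_apply₂₂]
    · rw [if_pos a.2]
    · rw [if_pos a.2]
    · have ha : (a : S) ∉ U := (Finset.mem_sdiff.mp a.2).2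
      rw [if_neg ha, Matrix.zero_apply, if_neg]
      intro h; exact ha (h ▸ b.2)
    · have ha : (a : S) ∉ U := (Finset.mem_sdiff.mp a.2).2
      rw [if_neg ha]
      by_cases h : a = b
      · subst h; simp
      · rw [if_neg (fun hv => h (Subtype.ext hv)), Matrix.one_apply_ne h]
  rw [this, Matrix.det_fromBlocks_zero₂₁, Matrix.det_one, mul_one]

/-- Auxiliary: inclusion–exclusion expansion of a determinant with rows `δ - M` on `A`. -/
lemma aux_B1 (M : Matrix S S F) (J A : Finset S) (hd : Disjoint J A) :
    ∑ L ∈ A.powerset, (-1:F)^L.card * Matrix.det (Matrix.of fun i j : ↥(J ∪ L) => M i j)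
      = Matrix.det (Matrix.of fun i j : ↥(J ∪ A) =>
          if (i : S) ∈ A then ((if (i:S) = (j:S) then (1:F) else 0) - M i j) else M i j) := by
  classical
  set ι := ↥(J ∪ A)
  set g : ι → Bool → (ι → F) := fun i s j =>
    if s then -(M i j) else (if (i : S) ∈ A then (if (i:S) = (j:S) then (1:F) else 0) else M i j)
    with hg
  set t : ι → Finset Bool := fun i => if (i : S) ∈ A then {false, true} else {false} with ht
  have hrows : (Matrix.of fun i j : ι =>
      if (i : S) ∈ A then ((if (i:S) = (j:S) then (1:F) else 0) - M i j) else M i j)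
      = fun i => ∑ s ∈ t i, g i s := by
    funext i j
    by_cases hiA : (i : S) ∈ A <;> simp [hg, ht, hiA, sub_eq_add_neg]
  have hexp := (Matrix.detRowAlternating : AlternatingMap F (ι → F) F ι).toMultilinearMap.map_sum_finset g t
  simp only [AlternatingMap.coe_multilinearMap] at hexp
  rw [Matrix.det, hrows, hexp]
  refine Finset.sum_nbij' (i := fun L => (fun k : ι => decide ((k:S) ∈ L)))
    (j := fun r => Finset.map (Function.Embedding.subtype _)
      (Finset.filter (fun k : ι => r k = true) Finset.univ)) ?_ ?_ ?_ ?_ ?_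
  · intro L hL
    rw [Finset.mem_powerset] at hL
    rw [Fintype.mem_piFinset]
    intro k
    by_cases hk : (k : S) ∈ L
    · simp [ht, hk, hL hk]
    · by_cases hkA : (k : S) ∈ A <;> simp [ht, hk, hkA]
  · intro r hr
    rw [Fintype.mem_piFinset] at hr
    rw [Finset.mem_powerset]
    intro x hx
    simp only [Finset.mem_map, Finset.mem_filter, Function.Embedding.coe_subtype] at hx
    obtain ⟨k, ⟨-, hk1⟩, rfl⟩ := hx
    by_contra hkA
    have h2 := hr k
    rw [ht] at h2
    simp only [if_neg hkA, Finset.mem_singleton] at h2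
    rw [h2] at hk1
    exact Bool.false_ne_true hk1
  · intro L hL
    rw [Finset.mem_powerset] at hL
    ext x
    simp only [Finset.mem_map, Finset.mem_filter, Function.Embedding.coe_subtype,
      Finset.mem_univ, true_and, decide_eq_true_eq]
    constructor
    · rintro ⟨k, hk, rfl⟩; exact hk
    · intro hx
      exact ⟨⟨x, Finset.mem_union_right _ (hL hx)⟩, hx, rfl⟩
  · intro r hr
    rw [Fintype.mem_piFinset] at hr
    funext k
    simp only [Finset.mem_map, Finset.mem_filter, Function.Embedding.coe_subtype,
      Finset.mem_univ, true_and]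
    by_cases hk : r k = true
    · rw [hk]
      exact decide_eq_true ⟨k, hk, rfl⟩
    · rw [Bool.not_eq_true] at hk
      rw [hk]
      apply decide_eq_false
      rintro ⟨k', hk', hkk⟩
      have : k' = k := Subtype.ext hkk
      rw [this] at hk'
      rw [hk] at hk'
      exact Bool.false_ne_true hk'
  · intro L hL
    rw [Finset.mem_powerset] at hL
    have hLJA : J ∪ L ⊆ J ∪ A := Finset.union_subset_union_right hL
    have hF : (fun (k : ι) => g k (decide ((k:S) ∈ L)))
        = Matrix.diagonal (fun k : ι => if (k:S) ∈ L then (-1:F) else 1) *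
          (Matrix.of fun k j : ι => if (k : S) ∈ (J ∪ L) then M k j
            else if (k:S) = (j:S) then (1:F) else 0) := by
      funext k j
      rw [Matrix.diagonal_mul]
      by_cases hk : (k : S) ∈ L
      · have hkJL : (k : S) ∈ J ∪ L := Finset.mem_union_right _ hk
        simp [hg, hk, hkJL]
      · have hkA : ((k:S) ∈ A) ∨ ((k:S) ∈ J) := Or.symm (Finset.mem_union.mp k.2)
        rcases hkA with hkA | hkJ
        · have hkJ : (k:S) ∉ J := fun h => (Finset.disjoint_left.mp hd h) hkA
          have hkJL : (k:S) ∉ J ∪ L := by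
            rw [Finset.mem_union]; rintro (h | h); exacts [hkJ h, hk h]
          simp [hg, hk, hkA, hkJL, hkJ]
        · have hkA : (k:S) ∉ A := fun h => (Finset.disjoint_left.mp hd hkJ) h
          have hkJL : (k:S) ∈ J ∪ L := Finset.mem_union_left _ hkJ
          simp [hg, hk, hkA, hkJL, hkJ]
    have : Matrix.detRowAlternating (fun (k : ι) => g k (decide ((k:S) ∈ L)))
        = Matrix.det (Matrix.diagonal (fun k : ι => if (k:S) ∈ L then (-1:F) else 1) *
          (Matrix.of fun k j : ι => if (k : S) ∈ (J ∪ L) then M k j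
            else if (k:S) = (j:S) then (1:F) else 0)) := by
      rw [← hF]; rfl
    rw [this, Matrix.det_mul, Matrix.det_diagonal, aux_det_delta M (J ∪ L) (J ∪ A) hLJA]
    congr 1
    rw [Finset.prod_ite, Finset.prod_const, Finset.prod_const, one_pow, mul_one]
    congr 1
    have : (Finset.filter (fun k : ι => (k:S) ∈ L) Finset.univ).card = L.card := by
      rw [← Finset.card_map (Function.Embedding.subtype _)]
      congr 1
      ext x
      simp only [Finset.mem_map, Finset.mem_filter, Finset.mem_univ, true_and,
        Function.Embedding.coe_subtype]
      constructor
      · rintro ⟨k, hk, rfl⟩; exact hk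
      · intro hx; exact ⟨⟨x, hLJA (Finset.mem_union_right _ hx)⟩, hx, rfl⟩
    rw [this]

/-- Auxiliary: Schur complement evaluation of the block determinant from `aux_B1`. -/
lemma aux_B2 (M : Matrix S S F) (J A : Finset S) (hd : Disjoint J A)
    (hinv : IsUnit (Matrix.det ((1 : Matrix ↥A ↥A F) - Matrix.of fun a b : ↥A => M a b))) :
    Matrix.det (Matrix.of fun i j : ↥(J ∪ A) =>
        if (i : S) ∈ A then ((if (i:S) = (j:S) then (1:F) else 0) - M i j) else M i j)
      = Matrix.det ((1 : Matrix ↥A ↥A F) - Matrix.of fun a b : ↥A => M a b) *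
        Matrix.det (Matrix.of fun i j : ↥J => M i j +
          ∑ a : ↥A, M i a *
            (((1 : Matrix ↥A ↥A F) - Matrix.of fun a b : ↥A => M a b)⁻¹).mulVec
              (fun b : ↥A => M b j) a) := by
  classical
  have hdisj : Disjoint (J : Set S) ((A : Finset S) : Set S) := by
    rw [Set.disjoint_left]
    intro x hx hx'
    exact Finset.disjoint_left.mp hd hx hx'
  have hmem : ∀ x, x ∈ J ∪ A ↔ x ∈ (J : Set S) ∪ ((A : Finset S) : Set S) := by
    intro x; simp [Finset.mem_union]
  let u : ↥(J ∪ A) ≃ ↥J ⊕ ↥A := (Equiv.subtypeEquivRight hmem).trans (Equiv.Set.union hdisj)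
  set D : Matrix ↥A ↥A F := (1 : Matrix ↥A ↥A F) - Matrix.of fun a b : ↥A => M a b with hD
  rw [← Matrix.det_submatrix_equiv_self u.symm]
  have hval : ∀ x : ↥J ⊕ ↥A, ((u.symm x : ↥(J ∪ A)) : S)
      = Sum.elim (fun a : ↥J => (a : S)) (fun a : ↥A => (a : S)) x := by
    rintro (a | a) <;> rfl
  have hblocks : (Matrix.of fun i j : ↥(J ∪ A) =>
        if (i : S) ∈ A then ((if (i:S) = (j:S) then (1:F) else 0) - M i j) else M i j).submatrix
        u.symm u.symm
      = Matrix.fromBlocks (Matrix.of fun i j : ↥J => M i j)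
          (Matrix.of fun (i : ↥J) (j : ↥A) => M i j)
          (-(Matrix.of fun (i : ↥A) (j : ↥J) => M i j)) D := by
    ext i j
    rcases i with (a | a) <;> rcases j with (b | b) <;>
      simp only [Matrix.submatrix_apply, Matrix.of_apply, hval, Sum.elim_inl, Sum.elim_inr,
        Matrix.fromBlocks_apply₁₁, Matrix.fromBlocks_apply₁₂, Matrix.fromBlocks_apply₂₁,
        Matrix.fromBlocks_apply₂₂]
    · rw [if_neg (fun h => Finset.disjoint_left.mp hd a.2 h)]
    · rw [if_neg (fun h => Finset.disjoint_left.mp hd a.2 h)]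
    · rw [if_pos a.2, Matrix.neg_apply, Matrix.of_apply, if_neg, zero_sub]
      intro h
      exact Finset.disjoint_left.mp hd b.2 (h ▸ a.2)
    · rw [if_pos a.2, hD, Matrix.sub_apply, Matrix.of_apply]
      congr 1
      by_cases h : a = b
      · subst h; simp
      · rw [if_neg (fun hv => h (Subtype.ext hv)), Matrix.one_apply_ne h]
  rw [hblocks]
  haveI : Invertible D := Matrix.invertibleOfIsUnitDet D hinv
  rw [Matrix.det_fromBlocks₂₂, Matrix.invOf_eq_nonsing_inv]
  congr 1
  congr 1
  ext i j
  simp only [Matrix.sub_apply, Matrix.of_apply, Matrix.mul_apply, Matrix.neg_apply,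
    Matrix.mulVec, dotProduct]
  rw [sub_eq_add_neg, ← Finset.sum_neg_distrib]
  congr 1
  have hterm : ∀ a : ↥A, -((∑ x : ↥A, M ↑i ↑x * D⁻¹ x a) * -M ↑a ↑j)
      = ∑ x : ↥A, M ↑i ↑x * (D⁻¹ x a * M ↑a ↑j) := by
    intro a
    rw [mul_neg, neg_neg, Finset.sum_mul]
    exact Finset.sum_congr rfl fun x _ => by ring
  rw [Finset.sum_congr rfl (fun a _ => hterm a), Finset.sum_comm]
  apply Finset.sum_congr rfl
  intro a _
  rw [Finset.mul_sum]

end AuxDet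

section AuxProb

variable {S : Type*} [Fintype S] [DecidableEq S]

/-- Auxiliary: inclusion–exclusion for the event `J ⊆ X ⊆ K`. -/
lemma aux_stepA (μ : Finset S → ℝ) (J K : Finset S) :
    ∑ L ∈ Kᶜ.powerset, (-1:𝕜)^L.card *
        (↑(∑ B ∈ Finset.univ.filter (fun B : Finset S => J ∪ L ⊆ B), μ B) : 𝕜)
      = (↑(∑ B ∈ Finset.univ.filter (fun B : Finset S => J ⊆ B ∧ B ⊆ K), μ B) : 𝕜) := by
  classical
  have hpow : ∀ x : Finset S, (∑ m ∈ x.powerset, (-1:𝕜)^m.card) = if x = ∅ then 1 else 0 := by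
    intro x
    have h := Finset.sum_powerset_neg_one_pow_card (x := x)
    have : (∑ m ∈ x.powerset, (-1:𝕜)^m.card) = (((∑ m ∈ x.powerset, (-1:ℤ)^m.card) : ℤ) : 𝕜) := by
      push_cast; rfl
    rw [this, h]
    split <;> simp
  have hcast : ∀ (p : Finset S → Prop) [DecidablePred p],
      (↑(∑ B ∈ Finset.univ.filter p, μ B) : 𝕜) = ∑ B : Finset S, if p B then (μ B : 𝕜) else 0 := by
    intro p _
    rw [Finset.sum_filter]
    push_cast
    apply Finset.sum_congr rfl
    intro B _
    split <;> simp
  rw [hcast]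
  have : ∀ L ∈ Kᶜ.powerset, (-1:𝕜)^L.card *
      (↑(∑ B ∈ Finset.univ.filter (fun B : Finset S => J ∪ L ⊆ B), μ B) : 𝕜)
      = ∑ B : Finset S, if J ∪ L ⊆ B then (-1:𝕜)^L.card * (μ B : 𝕜) else 0 := by
    intro L _
    rw [hcast, Finset.mul_sum]
    apply Finset.sum_congr rfl
    intro B _
    split <;> simp
  rw [Finset.sum_congr rfl this, Finset.sum_comm]
  apply Finset.sum_congr rfl
  intro B _
  by_cases hJB : J ⊆ B
  · have hq : ∀ L : Finset S, (J ∪ L ⊆ B) ↔ L ⊆ B := by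
      intro L
      rw [Finset.union_subset_iff]
      exact ⟨fun h => h.2, fun h => ⟨hJB, h⟩⟩
    simp only [hq]
    rw [← Finset.sum_filter]
    have hfil : Kᶜ.powerset.filter (fun L => L ⊆ B) = (Kᶜ ∩ B).powerset := by
      ext L
      simp only [Finset.mem_filter, Finset.mem_powerset, Finset.subset_inter_iff]
    rw [hfil, ← Finset.sum_mul, hpow]
    have hBK : (Kᶜ ∩ B = ∅) ↔ B ⊆ K := by
      rw [Finset.eq_empty_iff_forall_notMem]
      constructor
      · intro h x hx
        by_contra hxK
        exact h x (Finset.mem_inter.mpr ⟨Finset.mem_compl.mpr hxK, hx⟩)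
      · intro h x hx
        rw [Finset.mem_inter, Finset.mem_compl] at hx
        exact hx.1 (h hx.2)
    by_cases hB : B ⊆ K
    · rw [if_pos (hBK.mpr hB), if_pos ⟨hJB, hB⟩, one_mul]
    · rw [if_neg (fun h => hB (hBK.mp h)), if_neg (fun h => hB h.2), zero_mul]
  · rw [if_neg (fun h => hJB h.1)]
    apply Finset.sum_eq_zero
    intro L _
    rw [if_neg (fun h => hJB (fun x hx => h (Finset.mem_union_left _ hx)))]

end AuxProb

section AuxProj

variable {E : Type*} [NormedAddCommGroup E] [InnerProductSpace 𝕜 E]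
    [FiniteDimensional 𝕜 E] {S : Type*} [Fintype S] [DecidableEq S]

/-- Auxiliary: formula for the orthogonal projection onto the span of an orthonormal family. -/
lemma aux_proj_span_apply (e : S → E) (hon : Orthonormal 𝕜 e) (T : Finset S) (v : E) :
    ((Submodule.orthogonalProjectionOnto (Submodule.span 𝕜 (e '' (T : Set S))) v : E))
      = ∑ a ∈ T, (inner 𝕜 (e a) v : 𝕜) • e a := by
  apply Submodule.eq_starProjection_of_mem_of_inner_eq_zero
  · exact Submodule.sum_mem _ fun a ha => Submodule.smul_mem _ _
      (Submodule.subset_span ⟨a, by simpa using ha, rfl⟩)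
  · intro w hw
    have : Submodule.span 𝕜 (e '' (T : Set S)) ≤
        LinearMap.ker (innerSL 𝕜 (v - ∑ a ∈ T, (inner 𝕜 (e a) v : 𝕜) • e a) : E →ₗ[𝕜] 𝕜) := by
      rw [Submodule.span_le]
      rintro _ ⟨a, ha, rfl⟩
      simp only [SetLike.mem_coe, LinearMap.mem_ker, ContinuousLinearMap.coe_coe, innerSL_apply_apply, inner_sub_left,
        sum_inner, inner_smul_left]
      have ha' : a ∈ T := by simpa using ha
      rw [Finset.sum_eq_single a]
      · rw [orthonormal_iff_ite.mp hon a a, ← inner_conj_symm v (e a)]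
        simp
      · intro b hb hne
        rw [orthonormal_iff_ite.mp hon b a, if_neg hne]
        ring
      · intro h; exact absurd ha' h
    exact this hw

/-- Auxiliary: matrix entries of the projection onto the image of `H` under the projection
onto `E_K`, in terms of the matrix of the projection onto `H`. -/
lemma aux_projKey (e : S → E) (hon : Orthonormal 𝕜 e)
    (hspan : Submodule.span 𝕜 (Set.range e) = ⊤)
    (H : Submodule 𝕜 E) (K : Finset S)
    (Q : Matrix S S 𝕜)
    (hQdef : ∀ i j, Q i j = (inner 𝕜 (e i) (H.subtype (Submodule.orthogonalProjectionOnto H (e j))) : 𝕜))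
    (hinv : IsUnit (Matrix.det
      ((1 : Matrix ↥(Kᶜ) ↥(Kᶜ) 𝕜) - Matrix.of fun a b : ↥(Kᶜ) => Q a b)))
    (i j : S) (hi : i ∈ K) (hj : j ∈ K) :
    (inner 𝕜 (e i)
        ((Submodule.map ((Submodule.span 𝕜 (e '' (K : Set S))).subtype ∘ₗ
            (Submodule.orthogonalProjectionOnto (Submodule.span 𝕜 (e '' (K : Set S)))).toLinearMap) H).subtype
          (Submodule.orthogonalProjectionOnto (Submodule.map
            ((Submodule.span 𝕜 (e '' (K : Set S))).subtype ∘ₗ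
              (Submodule.orthogonalProjectionOnto (Submodule.span 𝕜 (e '' (K : Set S)))).toLinearMap) H)
            (e j))) : 𝕜)
      = Q i j + ∑ a : ↥(Kᶜ), Q i a *
          (((1 : Matrix ↥(Kᶜ) ↥(Kᶜ) 𝕜) - Matrix.of fun a b : ↥(Kᶜ) => Q a b)⁻¹).mulVec
            (fun b : ↥(Kᶜ) => Q b j) a := by
  classical
  set D : Matrix ↥(Kᶜ) ↥(Kᶜ) 𝕜 :=
    (1 : Matrix ↥(Kᶜ) ↥(Kᶜ) 𝕜) - Matrix.of fun a b : ↥(Kᶜ) => Q a b with hD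
  set y : ↥(Kᶜ) → 𝕜 := D⁻¹.mulVec (fun b : ↥(Kᶜ) => Q b j) with hy
  set w : E := ∑ a : ↥(Kᶜ), y a • e ↑a with hwdef
  set EK := Submodule.span 𝕜 (e '' (K : Set S)) with hEK
  set H' := Submodule.map (EK.subtype ∘ₗ (Submodule.orthogonalProjectionOnto EK).toLinearMap) H with hH'
  let b : OrthonormalBasis S 𝕜 E := OrthonormalBasis.mk hon hspan.ge
  have hb : ∀ k, b k = e k := fun k => by
    show (OrthonormalBasis.mk hon hspan.ge) k = e k
    rw [OrthonormalBasis.coe_mk]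
  have hQv : ∀ (v : E) (i' : S),
      (inner 𝕜 (e i') ((Submodule.orthogonalProjectionOnto H v : E)) : 𝕜) = ∑ k, Q i' k * (inner 𝕜 (e k) v : 𝕜) := by
    intro v i'
    have hv : v = ∑ k, (inner 𝕜 (e k) v : 𝕜) • e k := by
      conv_lhs => rw [← b.sum_repr' v]
      simp [hb]
    nth_rewrite 1 [hv]
    rw [map_sum]
    push_cast [Submodule.coe_sum]
    rw [inner_sum]
    apply Finset.sum_congr rfl
    intro k _
    rw [map_smul, Submodule.coe_smul, inner_smul_right, hQdef, mul_comm]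
    rfl
  have hw : ∀ k, (inner 𝕜 (e k) w : 𝕜) = if hk : k ∈ Kᶜ then y ⟨k, hk⟩ else 0 := by
    intro k
    rw [hwdef, inner_sum]
    simp_rw [inner_smul_right, orthonormal_iff_ite.mp hon]
    by_cases hk : k ∈ Kᶜ
    · rw [dif_pos hk, Finset.sum_eq_single (⟨k, hk⟩ : ↥(Kᶜ))]
      · simp
      · intro a _ ha
        rw [if_neg, mul_zero]
        intro hv
        exact ha (Subtype.ext hv.symm)
      · simp
    · rw [dif_neg hk]
      apply Finset.sum_eq_zero
      intro a _
      rw [if_neg, mul_zero]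
      intro hv
      rw [hv] at hk
      exact hk a.2
  set h : E := (Submodule.orthogonalProjectionOnto H (e j) : E) + (Submodule.orthogonalProjectionOnto H w : E) with hh
  have hmemH : h ∈ H := add_mem (Submodule.coe_mem _) (Submodule.coe_mem _)
  have hcoord : ∀ i' : S, (inner 𝕜 (e i') h : 𝕜) = Q i' j + ∑ a : ↥(Kᶜ), Q i' ↑a * y a := by
    intro i'
    rw [hh, inner_add_right, hQv (e j) i', hQv w i']
    congr 1
    · rw [Finset.sum_eq_single j]
      · rw [orthonormal_iff_ite.mp hon, if_pos rfl, mul_one]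
      · intro k _ hk
        rw [orthonormal_iff_ite.mp hon, if_neg hk, mul_zero]
      · intro hj'; exact absurd (Finset.mem_univ j) hj'
    · rw [← Finset.sum_subset (Finset.subset_univ (Kᶜ : Finset S))]
      · rw [← Finset.sum_attach (Kᶜ : Finset S) (fun k => Q i' k * (inner 𝕜 (e k) w : 𝕜)),
          Finset.univ_eq_attach]
        apply Finset.sum_congr rfl
        intro a _
        rw [hw]
        rw [dif_pos a.2]
      · intro k _ hk
        rw [hw, dif_neg hk, mul_zero]
  have hyid : ∀ a : ↥(Kᶜ), Q ↑a j + ∑ b : ↥(Kᶜ), Q ↑a ↑b * y b = y a := by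
    intro a
    have hDy : D.mulVec y = fun b : ↥(Kᶜ) => Q ↑b j := by
      rw [hy, Matrix.mulVec_mulVec, Matrix.mul_nonsing_inv _ hinv, Matrix.one_mulVec]
    have := congrFun hDy a
    rw [hD, Matrix.sub_mulVec, Matrix.one_mulVec] at this
    simp only [Pi.sub_apply] at this
    have hMv : (Matrix.of fun a b : ↥(Kᶜ) => Q a b).mulVec y a = ∑ b : ↥(Kᶜ), Q ↑a ↑b * y b := by
      simp [Matrix.mulVec, dotProduct]
    rw [hMv] at this
    linear_combination -this
  have hsumA : ∑ a ∈ (Kᶜ : Finset S), (inner 𝕜 (e a) h : 𝕜) • e a = w := by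
    rw [← Finset.sum_attach (Kᶜ : Finset S) (fun a => (inner 𝕜 (e a) h : 𝕜) • e a), hwdef,
      Finset.univ_eq_attach]
    apply Finset.sum_congr rfl
    intro a _
    congr 1
    rw [hcoord ↑a]
    exact hyid a
  have hPKh : (Submodule.orthogonalProjectionOnto EK h : E) = h - w := by
    rw [hEK, aux_proj_span_apply e hon K h]
    have htot : ∑ k, (inner 𝕜 (e k) h : 𝕜) • e k = h := by
      conv_rhs => rw [← b.sum_repr' h]
      simp [hb]
    have := Finset.sum_add_sum_compl K (fun k => (inner 𝕜 (e k) h : 𝕜) • e k)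
    rw [htot, hsumA] at this
    rw [eq_sub_iff_add_eq]
    exact this
  have hPKw : (Submodule.orthogonalProjectionOnto EK w : E) = 0 := by
    rw [hEK, aux_proj_span_apply e hon K w]
    apply Finset.sum_eq_zero
    intro k hk
    rw [hw, dif_neg (by simpa using hk), zero_smul]
  have hPKej : (Submodule.orthogonalProjectionOnto EK (e j) : E) = e j := by
    rw [← Submodule.starProjection_apply, Submodule.starProjection_eq_self_iff]
    exact Submodule.subset_span ⟨j, hj, rfl⟩
  have hproj : ((Submodule.orthogonalProjectionOnto H' (e j)) : E) = h - w := by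
    apply Submodule.eq_starProjection_of_mem_of_inner_eq_zero
    · rw [hH']
      refine Submodule.mem_map.mpr ⟨h, hmemH, ?_⟩
      simp only [LinearMap.comp_apply, ContinuousLinearMap.coe_coe, Submodule.coe_subtype]
      exact hPKh
    · intro z hz
      rw [hH'] at hz
      obtain ⟨g, hgH, rfl⟩ := Submodule.mem_map.mp hz
      simp only [LinearMap.comp_apply, ContinuousLinearMap.coe_coe, Submodule.coe_subtype]
      rw [← Submodule.starProjection_apply, ← Submodule.inner_starProjection_left_eq_right,
          Submodule.starProjection_apply]
      have hx : (Submodule.orthogonalProjectionOnto EK (e j - (h - w)) : E) = e j - (h - w) := by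
        rw [map_sub, map_sub]
        push_cast [Submodule.coe_sub]
        rw [hPKej, hPKh, hPKw, sub_zero]
      rw [hx]
      have hhPH : h = (Submodule.orthogonalProjectionOnto H (e j + w) : E) := by
        rw [hh, map_add, Submodule.coe_add]
      have heq : e j - (h - w) = (e j + w) - (Submodule.orthogonalProjectionOnto H (e j + w) : E) := by
        rw [← hhPH]; abel
      rw [heq]
      exact Submodule.inner_left_of_mem_orthogonal hgH
        (Submodule.sub_starProjection_mem_orthogonal (K := H) (e j + w))
  have hfin : ((H').subtype (Submodule.orthogonalProjectionOnto H' (e j))) = h - w := hproj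
  rw [hfin, inner_sub_right, hcoord i, hw, dif_neg (by simpa using hi), sub_zero]

end AuxProj

/-- **Conditioning a determinantal measure on staying inside `K`.**
If `X` is determinantal associated with the orthogonal projection on `H` in an
orthonormal basis `(e_i)_{i ∈ S}`, and `P(X ⊆ K) > 0`, then `X` conditioned on
`{X ⊆ K}` is determinantal, associated with the orthogonal projection onto the image
of `H` under the orthogonal projection onto `E_K = span (e_i : i ∈ K)`. -/
theorem determinantal_conditioned
    {E : Type*} [NormedAddCommGroup E] [InnerProductSpace 𝕜 E] [FiniteDimensional 𝕜 E]
    {S : Type*} [Fintype S] [DecidableEq S]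
    (e : S → E) (hon : Orthonormal 𝕜 e)
    (hspan : Submodule.span 𝕜 (Set.range e) = ⊤)
    (H : Submodule 𝕜 E)
    (μ : Finset S → ℝ) (hμ0 : ∀ B, 0 ≤ μ B) (hμ1 : ∑ B : Finset S, μ B = 1)
    (hdet : IsDeterminantal e H μ)
    (K : Finset S)
    (hK : 0 < ∑ B ∈ Finset.univ.filter (fun B : Finset S => B ⊆ K), μ B) :
    IsDeterminantal e
      (Submodule.map
        ((Submodule.span 𝕜 (e '' (K : Set S))).subtype ∘ₗ
          (Submodule.orthogonalProjectionOnto (Submodule.span 𝕜 (e '' (K : Set S)))).toLinearMap) H)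
      (fun B => (if B ⊆ K then μ B else 0) /
        (∑ B ∈ Finset.univ.filter (fun B : Finset S => B ⊆ K), μ B)) := by
  classical
  intro J
  set c : ℝ := ∑ B ∈ Finset.univ.filter (fun B : Finset S => B ⊆ K), μ B with hcdef
  set Q : Matrix S S 𝕜 :=
    fun i j => (inner 𝕜 (e i) (H.subtype (Submodule.orthogonalProjectionOnto H (e j))) : 𝕜) with hQ
  have hdetQ : ∀ T : Finset S,
      (↑(∑ B ∈ Finset.univ.filter (fun B : Finset S => T ⊆ B), μ B) : 𝕜)
        = Matrix.det (Matrix.of fun i j : ↥T => Q i j) := fun T => hdet T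
  set D : Matrix ↥(Kᶜ) ↥(Kᶜ) 𝕜 :=
    (1 : Matrix ↥(Kᶜ) ↥(Kᶜ) 𝕜) - Matrix.of fun a b : ↥(Kᶜ) => Q a b with hD
  -- `c = det D`
  have hDdet : (c : 𝕜) = D.det := by
    have h1 := aux_stepA (𝕜 := 𝕜) μ ∅ K
    have h2 : (c : 𝕜) = (↑(∑ B ∈ Finset.univ.filter
        (fun B : Finset S => ∅ ⊆ B ∧ B ⊆ K), μ B) : 𝕜) := by
      rw [hcdef]
      congr 2
      apply Finset.filter_congr
      intro B _
      simp
    rw [h2, ← h1, Finset.sum_congr rfl (fun L _ => by rw [hdetQ (∅ ∪ L)]),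
      aux_B1 Q ∅ (Kᶜ) (Finset.disjoint_left.mpr (fun {x} hx => absurd hx (Finset.notMem_empty x)))]
    let v : ↥(Kᶜ) ≃ ↥((∅ : Finset S) ∪ Kᶜ) := Equiv.subtypeEquivRight (fun x => by simp)
    rw [← Matrix.det_submatrix_equiv_self v]
    congr 1
    ext a b
    have hA : ((v a : ↥((∅ : Finset S) ∪ Kᶜ)) : S) ∈ (Kᶜ : Finset S) := a.2
    simp only [Matrix.submatrix_apply, Matrix.of_apply, if_pos hA, hD, Matrix.sub_apply,
      Matrix.of_apply]
    have hva : ((v a : ↥((∅ : Finset S) ∪ Kᶜ)) : S) = (a : S) := rfl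
    have hvb : ((v b : ↥((∅ : Finset S) ∪ Kᶜ)) : S) = (b : S) := rfl
    rw [hva, hvb]
    congr 1
    by_cases hab : a = b
    · subst hab; simp
    · rw [if_neg (fun hv => hab (Subtype.ext hv)), Matrix.one_apply_ne hab]
  have hc0 : (c : 𝕜) ≠ 0 := by
    rw [RCLike.ofReal_ne_zero]
    exact ne_of_gt hK
  have hinv : IsUnit D.det := by
    rw [← hDdet]
    exact IsUnit.mk0 _ hc0
  -- rewrite the left-hand side
  have hLHS : (∑ B ∈ Finset.univ.filter (fun B : Finset S => J ⊆ B),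
      ((if B ⊆ K then μ B else 0) / c))
      = (∑ B ∈ Finset.univ.filter (fun B : Finset S => J ⊆ B ∧ B ⊆ K), μ B) / c := by
    rw [← Finset.sum_div]
    congr 1
    rw [Finset.sum_filter, Finset.sum_filter]
    apply Finset.sum_congr rfl
    intro B _
    by_cases h1 : J ⊆ B <;> by_cases h2 : B ⊆ K <;> simp [h1, h2]
  rw [hLHS]
  by_cases hJK : J ⊆ K
  · -- main case
    have hdisj : Disjoint J (Kᶜ) := by
      rw [Finset.disjoint_left]
      intro x hx hx'
      exact (Finset.mem_compl.mp hx') (hJK hx)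
    have hrJ : (↑(∑ B ∈ Finset.univ.filter (fun B : Finset S => J ⊆ B ∧ B ⊆ K), μ B) : 𝕜)
        = D.det * Matrix.det (Matrix.of fun i j : ↥J => Q i j +
            ∑ a : ↥(Kᶜ), Q i a * (D⁻¹.mulVec (fun b : ↥(Kᶜ) => Q b j)) a) := by
      rw [← aux_stepA (𝕜 := 𝕜) μ J K,
        Finset.sum_congr rfl (fun L _ => by rw [hdetQ (J ∪ L)]),
        aux_B1 Q J (Kᶜ) hdisj, aux_B2 Q J (Kᶜ) hdisj hinv]
    have hmat : (Matrix.of fun i j : ↥J =>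
        (inner 𝕜 (e i) ((Submodule.map ((Submodule.span 𝕜 (e '' (K : Set S))).subtype ∘ₗ
            (Submodule.orthogonalProjectionOnto (Submodule.span 𝕜 (e '' (K : Set S)))).toLinearMap) H).subtype
          (Submodule.orthogonalProjectionOnto (Submodule.map
            ((Submodule.span 𝕜 (e '' (K : Set S))).subtype ∘ₗ
              (Submodule.orthogonalProjectionOnto (Submodule.span 𝕜 (e '' (K : Set S)))).toLinearMap) H)
            (e j))) : 𝕜))
        = Matrix.of fun i j : ↥J => Q i j +
            ∑ a : ↥(Kᶜ), Q i a * (D⁻¹.mulVec (fun b : ↥(Kᶜ) => Q b j)) a := by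
      ext i j
      exact aux_projKey e hon hspan H K Q (fun _ _ => rfl) hinv i j (hJK i.2) (hJK j.2)
    rw [RCLike.ofReal_div, div_eq_iff hc0, hrJ, hmat, hDdet]
    ring
  · -- degenerate case: `J` is not contained in `K`
    have hzero : (∑ B ∈ Finset.univ.filter (fun B : Finset S => J ⊆ B ∧ B ⊆ K), μ B) = 0 := by
      apply Finset.sum_eq_zero
      intro B hB
      exact absurd ((Finset.mem_filter.mp hB).2.1.trans (Finset.mem_filter.mp hB).2.2) hJK
    rw [hzero, zero_div]
    obtain ⟨i₀, hi₀J, hi₀K⟩ := Finset.not_subset.mp hJK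
    symm
    push_cast
    apply Matrix.det_eq_zero_of_row_eq_zero (⟨i₀, hi₀J⟩ : ↥J)
    intro j
    simp only [Matrix.of_apply]
    set x := Submodule.orthogonalProjectionOnto (Submodule.map
        ((Submodule.span 𝕜 (e '' (K : Set S))).subtype ∘ₗ
          (Submodule.orthogonalProjectionOnto (Submodule.span 𝕜 (e '' (K : Set S)))).toLinearMap) H) (e j)
      with hx
    obtain ⟨g, hgH, hgx⟩ := Submodule.mem_map.mp x.2
    have : (Submodule.map ((Submodule.span 𝕜 (e '' (K : Set S))).subtype ∘ₗ
        (Submodule.orthogonalProjectionOnto (Submodule.span 𝕜 (e '' (K : Set S)))).toLinearMap) H).subtype x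
        = (Submodule.orthogonalProjectionOnto (Submodule.span 𝕜 (e '' (K : Set S))) g : E) := hgx.symm
    rw [this, aux_proj_span_apply e hon K g, inner_sum]
    apply Finset.sum_eq_zero
    intro k hk
    rw [inner_smul_right, orthonormal_iff_ite.mp hon, if_neg, mul_zero]
    intro hik
    exact hi₀K (hik ▸ hk)
end

section
/- Let u : E_0 → E_1 be an injective linear map between finite-dimensional inner product spaces and let H be a linear subspace of E_0 with orthogonal complement H^⊥. Then det(u* u) = det(ι_{H^⊥}* u* u ι_{H^⊥}) · det(ι_H* u* Q u ι_H), where ι_H, ι_{H^⊥} are the inclusions, and Q is the orthogonal projection of E_1 onto the kernel of ι_{H^⊥}* u*, i.e., onto the orthogonal complement of u(H^⊥). -/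
open LinearMap Matrix Module RealInnerProductSpace

private lemma adjoint_subtype_eq' {E : Type*} [NormedAddCommGroup E] [InnerProductSpace ℝ E]
    [FiniteDimensional ℝ E] (K : Submodule ℝ E) :
    LinearMap.adjoint K.subtype = (Submodule.orthogonalProjectionOnto K).toLinearMap := by
  symm
  rw [LinearMap.eq_adjoint_iff]
  intro x y
  rw [Submodule.coe_inner]
  have h := Submodule.sub_starProjection_mem_orthogonal (K := K) x
  have h2 : (inner ℝ (x - ↑((Submodule.orthogonalProjectionOnto K) x)) ((y : E) : E) : ℝ) = 0 :=
    (Submodule.mem_orthogonal' K _).1 h _ y.2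
  rw [inner_sub_left] at h2
  exact (sub_eq_zero.mp h2).symm

set_option maxHeartbeats 1000000 in
set_option synthInstance.maxHeartbeats 400000 in
/-- **Schur complement factorization of squared volumes.**
Let `u : E₀ → E₁` be an injective linear map between finite-dimensional real inner
product spaces and `H ⊆ E₀` a subspace.  Then
`det (u* u) = det (ι_{H^⊥}* u* u ι_{H^⊥}) · det (ι_H* u* Q u ι_H)`,
where `Q` is the orthogonal projection of `E₁` onto `ker (ι_{H^⊥}* u*)`. -/
theorem schur_complement_volume
    {E₀ E₁ : Type*}
    [NormedAddCommGroup E₀] [InnerProductSpace ℝ E₀] [FiniteDimensional ℝ E₀]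
    [NormedAddCommGroup E₁] [InnerProductSpace ℝ E₁] [FiniteDimensional ℝ E₁]
    (u : E₀ →ₗ[ℝ] E₁) (hu : Function.Injective u)
    (H : Submodule ℝ E₀) :
    LinearMap.det (LinearMap.adjoint u ∘ₗ u) =
      LinearMap.det
        ((LinearMap.adjoint (Hᗮ.subtype)) ∘ₗ (LinearMap.adjoint u) ∘ₗ u ∘ₗ Hᗮ.subtype)
      *
      LinearMap.det
        ((LinearMap.adjoint (H.subtype)) ∘ₗ (LinearMap.adjoint u) ∘ₗ
          ((LinearMap.ker ((LinearMap.adjoint (Hᗮ.subtype)) ∘ₗ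
              (LinearMap.adjoint u))).subtype ∘ₗ
            (Submodule.orthogonalProjectionOnto
              (LinearMap.ker ((LinearMap.adjoint (Hᗮ.subtype)) ∘ₗ
                (LinearMap.adjoint u)))).toLinearMap) ∘ₗ
          u ∘ₗ H.subtype) := by
  classical
  set K : Submodule ℝ E₀ := Hᗮ with hK
  set ι₁ : H →ₗ[ℝ] E₀ := H.subtype with hι₁
  set ι₂ : K →ₗ[ℝ] E₀ := K.subtype with hι₂
  set π₁ : E₀ →ₗ[ℝ] H := LinearMap.adjoint ι₁ with hπ₁
  set π₂ : E₀ →ₗ[ℝ] K := LinearMap.adjoint ι₂ with hπ₂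
  set G : E₀ →ₗ[ℝ] E₀ := LinearMap.adjoint u ∘ₗ u with hG
  set A : H →ₗ[ℝ] H := π₁ ∘ₗ G ∘ₗ ι₁ with hA
  set B : K →ₗ[ℝ] H := π₁ ∘ₗ G ∘ₗ ι₂ with hB
  set C : H →ₗ[ℝ] K := π₂ ∘ₗ G ∘ₗ ι₁ with hC
  set D : K →ₗ[ℝ] K := π₂ ∘ₗ G ∘ₗ ι₂ with hD
  set v : K →ₗ[ℝ] E₁ := u ∘ₗ ι₂ with hv
  have hadjv : LinearMap.adjoint v = π₂ ∘ₗ LinearMap.adjoint u := by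
    rw [hv, LinearMap.adjoint_comp]
  have hD_eq : D = LinearMap.adjoint v ∘ₗ v := by
    rw [hadjv, hD, hG]; rfl
  have hvinj : Function.Injective v := by
    rw [hv]
    exact hu.comp K.injective_subtype
  -- D is bijective
  have hDinj : Function.Injective D := by
    intro x y hxy
    have h : D (x - y) = 0 := by rw [map_sub, hxy, sub_self]
    have hDz : LinearMap.adjoint v (v (x - y)) = D (x - y) := by rw [hD_eq]; rfl
    have h2 : (inner ℝ (v (x - y)) (v (x - y)) : ℝ) = 0 := by
      rw [← LinearMap.adjoint_inner_left v, hDz, h, inner_zero_left]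
    have h3 : v (x - y) = 0 := inner_self_eq_zero.mp h2
    have := hvinj (by simpa using h3 : v (x - y) = v 0)
    exact sub_eq_zero.mp (by simpa using this)
  have hDsurj : Function.Surjective D :=
    (LinearMap.injective_iff_surjective).mp hDinj
  let d : K ≃ₗ[ℝ] K := LinearEquiv.ofBijective D ⟨hDinj, hDsurj⟩
  have hd : (d : K →ₗ[ℝ] K) = D := rfl
  have hDs : D ∘ₗ (d.symm : K →ₗ[ℝ] K) = LinearMap.id := by
    ext x
    exact congrArg Subtype.val (d.apply_symm_apply x)
  have hsD : (d.symm : K →ₗ[ℝ] K) ∘ₗ D = LinearMap.id := by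
    ext x
    exact congrArg Subtype.val (d.symm_apply_apply x)
  -- the kernel
  set Kk : Submodule ℝ E₁ := LinearMap.ker (π₂ ∘ₗ LinearMap.adjoint u) with hKk
  have hKkv : Kk = LinearMap.ker (LinearMap.adjoint v) := by rw [hadjv]
  -- the projection formula
  have hQ : Kk.subtype ∘ₗ (Submodule.orthogonalProjectionOnto Kk).toLinearMap
      = LinearMap.id - v ∘ₗ (d.symm : K →ₗ[ℝ] K) ∘ₗ LinearMap.adjoint v := by
    ext y
    have hmem : y - v (d.symm (LinearMap.adjoint v y)) ∈ Kk := by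
      rw [hKkv, LinearMap.mem_ker, map_sub]
      have : LinearMap.adjoint v (v (d.symm (LinearMap.adjoint v y)))
          = D (d.symm (LinearMap.adjoint v y)) := by rw [hD_eq]; rfl
      rw [this]
      have : D (d.symm (LinearMap.adjoint v y)) = LinearMap.adjoint v y :=
        d.apply_symm_apply _
      rw [this, sub_self]
    have horth : y - (y - v (d.symm (LinearMap.adjoint v y))) ∈ Kkᗮ := by
      rw [sub_sub_cancel, Submodule.mem_orthogonal]
      intro w hw
      rw [hKkv, LinearMap.mem_ker] at hw
      rw [← LinearMap.adjoint_inner_left v, hw, inner_zero_left]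
    have := Submodule.eq_starProjection_of_mem_orthogonal hmem horth
    simpa using this
  -- bases and the block decomposition
  let b₁ : Basis (Fin (finrank ℝ H)) ℝ H := finBasis ℝ H
  let b₂ : Basis (Fin (finrank ℝ K)) ℝ K := finBasis ℝ K
  let bp := b₁.prod b₂
  have hcompl : IsCompl H K := by
    rw [hK]; exact H.isCompl_orthogonal_of_hasOrthogonalProjection
  let e : (H × K) ≃ₗ[ℝ] E₀ := Submodule.prodEquivOfIsCompl H K hcompl
  have hesymm : ∀ z : E₀, e.symm z =
      (Submodule.orthogonalProjectionOnto H z, Submodule.orthogonalProjectionOnto K z) := by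
    intro z
    rw [LinearEquiv.symm_apply_eq]
    symm
    show (↑(Submodule.orthogonalProjectionOnto H z) + ↑(Submodule.orthogonalProjectionOnto K z) : E₀) = z
    exact Submodule.starProjection_add_starProjection_orthogonal (K := H) z
  have hπ₁' : ∀ z : E₀, π₁ z = Submodule.orthogonalProjectionOnto H z := by
    intro z; rw [hπ₁, hι₁, adjoint_subtype_eq']; rfl
  have hπ₂' : ∀ z : E₀, π₂ z = Submodule.orthogonalProjectionOnto K z := by
    intro z; rw [hπ₂, hι₂, adjoint_subtype_eq']; rfl
  let M₀ : (↥H × ↥K) →ₗ[ℝ] (↥H × ↥K) :=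
    (A ∘ₗ LinearMap.fst ℝ ↥H ↥K + B ∘ₗ LinearMap.snd ℝ ↥H ↥K).prod
      (C ∘ₗ LinearMap.fst ℝ ↥H ↥K + D ∘ₗ LinearMap.snd ℝ ↥H ↥K)
  have hM : (e.symm : E₀ →ₗ[ℝ] ↥H × ↥K) ∘ₗ G ∘ₗ (e : ↥H × ↥K →ₗ[ℝ] E₀) = M₀ := by
    apply LinearMap.ext
    rintro ⟨x, y⟩
    have he : e (x, y) = (x : E₀) + (y : E₀) := rfl
    rw [LinearMap.comp_apply, LinearMap.comp_apply, LinearEquiv.coe_coe, LinearEquiv.coe_coe,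
      he, hesymm]
    have h1 : Submodule.orthogonalProjectionOnto H (G ((x : E₀) + (y : E₀))) = A x + B y := by
      rw [← hπ₁']
      show π₁ (G ((x : E₀) + (y : E₀))) = π₁ (G (ι₁ x)) + π₁ (G (ι₂ y))
      rw [← map_add π₁, ← map_add G]
      rfl
    have h2 : Submodule.orthogonalProjectionOnto K (G ((x : E₀) + (y : E₀))) = C x + D y := by
      rw [← hπ₂']
      show π₂ (G ((x : E₀) + (y : E₀))) = π₂ (G (ι₁ x)) + π₂ (G (ι₂ y))
      rw [← map_add π₂, ← map_add G]
      rfl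
    rw [h1, h2]
    rfl
  have hblocks : LinearMap.toMatrix bp bp M₀
      = Matrix.fromBlocks (LinearMap.toMatrix b₁ b₁ A) (LinearMap.toMatrix b₂ b₁ B)
          (LinearMap.toMatrix b₁ b₂ C) (LinearMap.toMatrix b₂ b₂ D) := by
    have hbp1 : ∀ j, bp (Sum.inl j) = (b₁ j, 0) := fun j =>
      Prod.ext (b₁.prod_apply_inl_fst b₂ j) (b₁.prod_apply_inl_snd b₂ j)
    have hbp2 : ∀ j, bp (Sum.inr j) = (0, b₂ j) := fun j =>
      Prod.ext (b₁.prod_apply_inr_fst b₂ j) (b₁.prod_apply_inr_snd b₂ j)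
    have hM₀ : ∀ p : ↥H × ↥K, M₀ p = (A p.1 + B p.2, C p.1 + D p.2) := fun p => rfl
    ext (i | i) (j | j)
    · rw [LinearMap.toMatrix_apply, Matrix.fromBlocks_apply₁₁, hbp1, hM₀,
        Basis.prod_repr_inl, LinearMap.toMatrix_apply]
      simp only [map_zero, add_zero]
    · rw [LinearMap.toMatrix_apply, Matrix.fromBlocks_apply₁₂, hbp2, hM₀,
        Basis.prod_repr_inl, LinearMap.toMatrix_apply]
      simp only [map_zero, zero_add]
    · rw [LinearMap.toMatrix_apply, Matrix.fromBlocks_apply₂₁, hbp1, hM₀,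
        Basis.prod_repr_inr, LinearMap.toMatrix_apply]
      simp only [map_zero, add_zero]
    · rw [LinearMap.toMatrix_apply, Matrix.fromBlocks_apply₂₂, hbp2, hM₀,
        Basis.prod_repr_inr, LinearMap.toMatrix_apply]
      simp only [map_zero, zero_add]
  -- invertibility of the matrix of D
  haveI : Invertible (LinearMap.toMatrix b₂ b₂ D) :=
    ⟨LinearMap.toMatrix b₂ b₂ (d.symm : K →ₗ[ℝ] K),
     by rw [← LinearMap.toMatrix_comp b₂ b₂ b₂, hsD, LinearMap.toMatrix_id],
     by rw [← LinearMap.toMatrix_comp b₂ b₂ b₂, hDs, LinearMap.toMatrix_id]⟩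
  -- the Schur complement map
  have hSchur : π₁ ∘ₗ (LinearMap.adjoint u) ∘ₗ
        (Kk.subtype ∘ₗ (Submodule.orthogonalProjectionOnto Kk).toLinearMap) ∘ₗ u ∘ₗ ι₁
      = A - B ∘ₗ (d.symm : K →ₗ[ℝ] K) ∘ₗ C := by
    rw [hQ]
    ext x
    simp only [LinearMap.comp_apply, LinearMap.sub_apply, LinearMap.id_apply, map_sub,
      LinearMap.coe_comp, Function.comp_apply]
    have h1 : LinearMap.adjoint v (u (ι₁ x)) = C x := by
      rw [hadjv]; rfl
    rw [h1]
    rfl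
  -- putting it together
  have hdet1 : LinearMap.det G =
      LinearMap.det ((e.symm : E₀ →ₗ[ℝ] H × K) ∘ₗ G ∘ₗ (e : H × K →ₗ[ℝ] E₀)) := by
    have := LinearMap.det_conj G e.symm
    rw [LinearEquiv.symm_symm] at this
    exact this.symm
  have hfinal : LinearMap.det G = LinearMap.det D *
      LinearMap.det (A - B ∘ₗ (d.symm : K →ₗ[ℝ] K) ∘ₗ C) := by
    rw [hdet1, hM, ← LinearMap.det_toMatrix bp, hblocks, Matrix.det_fromBlocks₂₂]
    congr 1
    · rw [LinearMap.det_toMatrix]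
    · rw [← LinearMap.det_toMatrix b₁]
      congr 1
      have hinv : (⅟(LinearMap.toMatrix b₂ b₂ D) : Matrix _ _ ℝ)
          = LinearMap.toMatrix b₂ b₂ (d.symm : K →ₗ[ℝ] K) :=
        invOf_eq_right_inv
          (by rw [← LinearMap.toMatrix_comp b₂ b₂ b₂, hDs, LinearMap.toMatrix_id])
      have hsub : LinearMap.toMatrix b₁ b₁ (A - B ∘ₗ (d.symm : K →ₗ[ℝ] K) ∘ₗ C)
          = LinearMap.toMatrix b₁ b₁ A
            - LinearMap.toMatrix b₁ b₁ (B ∘ₗ (d.symm : K →ₗ[ℝ] K) ∘ₗ C) :=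
        map_sub (LinearMap.toMatrix b₁ b₁) _ _
      rw [hinv, hsub, LinearMap.toMatrix_comp b₁ b₂ b₁ B,
        LinearMap.toMatrix_comp b₁ b₂ b₂ (d.symm : K →ₗ[ℝ] K) C, Matrix.mul_assoc]
  rw [show LinearMap.det (LinearMap.adjoint u ∘ₗ u) = LinearMap.det G from rfl, hfinal, ← hSchur]
  rfl
end

section
/- Let E be a finite-dimensional inner product space with orthogonal basis (e_i)_{i∈S} and, for positive weights x = (x_i), the twisted inner product ⟨u,v⟩_x = Σ_i x_i ū_i v_i. Let w : 2^S → ℝ_{≥0} be not identically zero and let a be an injective linear map from an inner product space into E such that for every choice of positive weights x, det(a*_x a) = Σ_{B⊆S} x^B w(B), where a*_x is the adjoint with respect to ⟨·,·⟩_x and x^B = Π_{i∈B} x_i. Then for every x, the probability measure on 2^S assigning B probability proportional to x^B w(B) is determinantal, associated with the ⟨·,·⟩_x-orthogonal projection onto the image of a, in the basis (e_i / ||e_i||_x)_{i∈S}. -/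
open Polynomial in
lemma aux_coeff_det_linear {n : Type*} [Fintype n] [DecidableEq n] (G D : Matrix n n ℝ) :
    ((Matrix.of fun i j => C (G i j) * X + C (D i j)).det).coeff (Fintype.card n) = G.det := by
  rw [Matrix.det_apply, Polynomial.finset_sum_coeff, Matrix.det_apply]
  refine Finset.sum_congr rfl fun σ _ => ?_
  rw [Polynomial.coeff_smul]
  congr 1
  have h : ∀ p ∈ (Finset.univ : Finset n),
      natDegree ((Matrix.of fun i j => C (G i j) * X + C (D i j)) (σ p) p) ≤ 1 := by
    intro p _
    simp only [Matrix.of_apply]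
    compute_degree
  have := Polynomial.coeff_prod_of_natDegree_le (s := (Finset.univ : Finset n))
    (fun p => (Matrix.of fun i j => C (G i j) * X + C (D i j)) (σ p) p) 1 h
  simp only [Finset.card_univ, mul_one] at this
  rw [this]
  refine Finset.prod_congr rfl fun p _ => ?_
  simp [coeff_add, coeff_C_mul, coeff_C]

/-- **The routine construction lemma for determinantal measures.**
Let `E = ℝ^S` with orthogonal basis `(e_i)` and, for positive weights `x`, the twisted
inner product `⟨u,v⟩_x = Σ_i x_i u_i v_i`.  Suppose `a` is an injective linear map into
`E` (given by a matrix `A` with linearly independent columns) such that for all positive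
weights `x` one has `det(a*_x a) = det (Aᵀ D_x A) = Σ_B x^B w(B)`, where `w` is a
nonnegative, not identically zero function on subsets of `S`.  Then for each positive
`x`, the probability measure assigning `B` a probability proportional to `x^B w(B)` is
determinantal, associated with the `⟨·,·⟩_x`-orthogonal projection onto `im a`
(whose kernel, in the orthonormal basis `(e_i/‖e_i‖_x)`, is the matrix
`√(x_i) √(x_j) · (A (Aᵀ D_x A)⁻¹ Aᵀ)_{ij}`). -/
theorem routine_construction_lemma
    {S : Type*} [Fintype S] [DecidableEq S] {m : ℕ}
    (A : Matrix S (Fin m) ℝ)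
    (hA : LinearIndependent ℝ (fun j : Fin m => fun i : S => A i j))
    (w : Finset S → ℝ) (hw0 : ∀ B, 0 ≤ w B) (hw : ∃ B, w B ≠ 0)
    (hdet : ∀ x : S → ℝ, (∀ i, 0 < x i) →
      (A.transpose * Matrix.diagonal x * A).det =
        ∑ B : Finset S, (∏ i ∈ B, x i) * w B)
    (x : S → ℝ) (hx : ∀ i, 0 < x i) :
    ∀ J : Finset S,
      (∑ B ∈ Finset.univ.filter (fun B : Finset S => J ⊆ B),
          (∏ i ∈ B, x i) * w B) /
        (∑ B : Finset S, (∏ i ∈ B, x i) * w B) =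
      Matrix.det (Matrix.of fun i j : J =>
        Real.sqrt (x i) * Real.sqrt (x j) *
          (A * (A.transpose * Matrix.diagonal x * A)⁻¹ * A.transpose) i j) := by
  intro J
  classical
  set M : Matrix (Fin m) (Fin m) ℝ := A.transpose * Matrix.diagonal x * A with hMdef
  -- positivity of the normalizing constant
  have hsum_pos : 0 < ∑ B : Finset S, (∏ i ∈ B, x i) * w B := by
    obtain ⟨B₀, hB₀⟩ := hw
    refine Finset.sum_pos' (fun B _ => ?_) ⟨B₀, Finset.mem_univ _, ?_⟩
    · exact mul_nonneg (Finset.prod_nonneg fun i _ => (hx i).le) (hw0 B)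
    · exact mul_pos (Finset.prod_pos fun i _ => hx i) (lt_of_le_of_ne (hw0 B₀) (Ne.symm hB₀))
  have hMdet : M.det = ∑ B : Finset S, (∏ i ∈ B, x i) * w B := hdet x hx
  have hMdet0 : M.det ≠ 0 := by rw [hMdet]; exact hsum_pos.ne'
  have hMunit : IsUnit M.det := isUnit_iff_ne_zero.mpr hMdet0
  set K : Matrix S S ℝ := A * M⁻¹ * A.transpose with hKdef
  set G : Matrix J J ℝ := Matrix.of (fun p q : J => K (p : S) (q : S) * x q) with hGdef
  set d : S → ℝ := fun i => if i ∈ J then x i else 0 with hddef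
  set N : Matrix (Fin m) (Fin m) ℝ := A.transpose * Matrix.diagonal d * A with hNdef
  set B1 : Matrix (Fin m) J ℝ :=
    Matrix.of (fun r (q : J) => (M⁻¹ * A.transpose) r (q : S) * x q) with hB1def
  set B2 : Matrix J (Fin m) ℝ := Matrix.of (fun (p : J) r => A (p : S) r) with hB2def
  -- M⁻¹ * N = B1 * B2
  have hfac : M⁻¹ * N = B1 * B2 := by
    have hN : M⁻¹ * N = M⁻¹ * A.transpose * Matrix.diagonal d * A := by
      simp only [hNdef, Matrix.mul_assoc]
    rw [hN]
    ext p q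
    rw [Matrix.mul_apply, Matrix.mul_apply]
    have step : ∀ i : S, (M⁻¹ * A.transpose * Matrix.diagonal d) p i * A i q
        = if i ∈ J then (M⁻¹ * A.transpose) p i * x i * A i q else 0 := by
      intro i
      rw [Matrix.mul_diagonal]
      simp only [hddef]
      split <;> ring
    rw [Finset.sum_congr rfl fun i _ => step i, Finset.sum_ite_mem, Finset.univ_inter,
      ← Finset.sum_coe_sort]
    simp [hB1def, hB2def]
  -- B2 * B1 = G
  have hGfac : B2 * B1 = G := by
    ext p q
    rw [Matrix.mul_apply]
    simp only [hB1def, hB2def, hGdef, Matrix.of_apply, hKdef, Matrix.mul_assoc,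
      Matrix.mul_apply]
    rw [Finset.sum_mul]
    exact Finset.sum_congr rfl fun r _ => by ring
  -- the two polynomials
  set P : Polynomial ℝ :=
    ∑ B : Finset S, Polynomial.C ((∏ i ∈ B, x i) * w B) * Polynomial.X ^ (B ∩ J).card with hPdef
  set Q : Polynomial ℝ := Polynomial.C M.det *
    (Matrix.of fun p q : J => Polynomial.C (G p q) * Polynomial.X
      + Polynomial.C ((1 : Matrix J J ℝ) p q - G p q)).det with hQdef
  have hevalP : ∀ t : ℝ, Polynomial.eval t P
      = ∑ B : Finset S, (∏ i ∈ B, x i) * w B * t ^ (B ∩ J).card := by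
    intro t
    simp [hPdef, Polynomial.eval_finset_sum, Polynomial.eval_prod]
  have hevalQ : ∀ t : ℝ, Polynomial.eval t Q
      = M.det * ((1 : Matrix J J ℝ) + (t - 1) • G).det := by
    intro t
    rw [hQdef, Polynomial.eval_mul, Polynomial.eval_C]
    congr 1
    have := (Polynomial.evalRingHom t).map_det
      (Matrix.of fun p q : J => Polynomial.C (G p q) * Polynomial.X
        + Polynomial.C ((1 : Matrix J J ℝ) p q - G p q))
    simp only [Polynomial.coe_evalRingHom] at this
    rw [this]
    congr 1
    ext p q
    simp only [RingHom.mapMatrix_apply, Matrix.map_apply, Matrix.of_apply, Polynomial.eval_add,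
      Polynomial.eval_mul, Polynomial.eval_C, Polynomial.eval_X, Polynomial.coe_evalRingHom,
      Matrix.add_apply, Matrix.smul_apply, smul_eq_mul]
    ring
  -- the key identity for t > 0
  have hkey : ∀ t ∈ Set.Ioi (0 : ℝ), Polynomial.eval t P = Polynomial.eval t Q := by
    intro t ht
    set x' : S → ℝ := fun i => x i * (if i ∈ J then t else 1) with hx'def
    have hx' : ∀ i, 0 < x' i := by
      intro i
      refine mul_pos (hx i) ?_
      split
      · exact ht
      · exact one_pos
    have hprod : ∀ B : Finset S, (∏ i ∈ B, x' i) = (∏ i ∈ B, x i) * t ^ (B ∩ J).card := by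
      intro B
      rw [hx'def]
      rw [Finset.prod_mul_distrib, Finset.prod_ite_mem, Finset.prod_const]
    have hdiag : Matrix.diagonal x' = Matrix.diagonal x + (t - 1) • Matrix.diagonal d := by
      have hfun : x' = x + (t - 1) • d := by
        funext i
        simp only [hx'def, hddef, Pi.add_apply, Pi.smul_apply, smul_eq_mul]
        split <;> ring
      rw [hfun, ← Matrix.diagonal_smul, Matrix.diagonal_add]
      rfl
    have hsplit : A.transpose * Matrix.diagonal x' * A = M + (t - 1) • N := by
      rw [hdiag, Matrix.mul_add, Matrix.add_mul, hMdef, hNdef, Matrix.mul_smul,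
        Matrix.smul_mul]
    have hdetsplit : (M + (t - 1) • N).det
        = M.det * ((1 : Matrix (Fin m) (Fin m) ℝ) + (t - 1) • (M⁻¹ * N)).det := by
      rw [← Matrix.det_mul]
      congr 1
      rw [Matrix.mul_add, Matrix.mul_one, Matrix.mul_smul, ← Matrix.mul_assoc,
        Matrix.mul_nonsing_inv M hMunit, Matrix.one_mul]
    have hcomm : ((1 : Matrix (Fin m) (Fin m) ℝ) + (t - 1) • (M⁻¹ * N)).det
        = ((1 : Matrix J J ℝ) + (t - 1) • G).det := by
      rw [hfac, ← Matrix.smul_mul, Matrix.det_one_add_mul_comm, Matrix.mul_smul,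
        hGfac]
    rw [hevalP, hevalQ]
    calc ∑ B : Finset S, (∏ i ∈ B, x i) * w B * t ^ (B ∩ J).card
        = ∑ B : Finset S, (∏ i ∈ B, x' i) * w B := by
          refine Finset.sum_congr rfl fun B _ => ?_
          rw [hprod]; ring
      _ = (A.transpose * Matrix.diagonal x' * A).det := (hdet x' hx').symm
      _ = M.det * ((1 : Matrix J J ℝ) + (t - 1) • G).det := by
          rw [hsplit, hdetsplit, hcomm]
  have hPQ : P = Q :=
    Polynomial.eq_of_infinite_eval_eq P Q
      ((Set.Ioi_infinite 0).mono fun t ht => hkey t ht)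
  -- coefficient extraction
  have hcoeffP : P.coeff J.card
      = ∑ B ∈ Finset.univ.filter (fun B : Finset S => J ⊆ B), (∏ i ∈ B, x i) * w B := by
    rw [hPdef, Polynomial.finset_sum_coeff]
    rw [Finset.sum_filter]
    refine Finset.sum_congr rfl fun B _ => ?_
    rw [Polynomial.coeff_C_mul, Polynomial.coeff_X_pow]
    have hiff : J.card = (B ∩ J).card ↔ J ⊆ B := by
      constructor
      · intro h
        have hsub : B ∩ J ⊆ J := Finset.inter_subset_right
        have : B ∩ J = J := Finset.eq_of_subset_of_card_le hsub (le_of_eq h)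
        rw [← this]
        exact Finset.inter_subset_left
      · intro h
        rw [Finset.inter_eq_right.mpr h]
    by_cases h : J ⊆ B
    · rw [if_pos (hiff.mpr h), if_pos h, mul_one]
    · rw [if_neg (fun hc => h (hiff.mp hc)), if_neg h, mul_zero]
  have hcoeffQ : Q.coeff J.card = M.det * G.det := by
    rw [hQdef, Polynomial.coeff_C_mul]
    congr 1
    have := aux_coeff_det_linear G ((1 : Matrix J J ℝ) - G)
    simp only [Matrix.sub_apply] at this
    rw [← Fintype.card_coe J]
    exact this
  -- conclude
  have hG : G.det = Matrix.det (Matrix.of fun i j : J =>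
      Real.sqrt (x i) * Real.sqrt (x j) *
        (A * (A.transpose * Matrix.diagonal x * A)⁻¹ * A.transpose) i j) := by
    have h1 : Matrix.det (Matrix.of fun i j : J =>
        Real.sqrt (x i) * Real.sqrt (x j) * K (i : S) (j : S))
        = (∏ i : J, Real.sqrt (x i)) * (∏ i : J, Real.sqrt (x i)) *
          Matrix.det (Matrix.of fun i j : J => K (i : S) (j : S)) := by
      rw [show (Matrix.of fun i j : J =>
          Real.sqrt (x i) * Real.sqrt (x j) * K (i : S) (j : S))
          = Matrix.of (fun i j : J => Real.sqrt (x i) *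
            (Matrix.of fun i j : J => Real.sqrt (x j) * K (i : S) (j : S)) i j) from by
          ext p q; simp [mul_assoc]]
      rw [Matrix.det_mul_column, mul_assoc]
      congr 1
      exact Matrix.det_mul_row (fun j : J => Real.sqrt (x j)) (Matrix.of fun i j : J => K (i : S) (j : S))
    have h2 : G.det = (∏ i : J, x (i : S)) *
        Matrix.det (Matrix.of fun i j : J => K (i : S) (j : S)) := by
      rw [show G = Matrix.of (fun i j : J =>
          x (j : S) * (Matrix.of fun i j : J => K (i : S) (j : S)) i j) from by
          ext p q; simp [hGdef, mul_comm]]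
      rw [Matrix.det_mul_row]
    rw [← hMdef, ← hKdef, h1, h2, ← Finset.prod_mul_distrib]
    congr 1
    exact Finset.prod_congr rfl fun i _ => (Real.mul_self_sqrt (hx i).le).symm
  rw [← hG, ← hMdet, ← hcoeffP, hPQ, hcoeffQ, mul_comm, mul_div_assoc,
    div_self hMdet0, mul_one]
end
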